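/- arXiv:1209.3980 — 2 statements merged into one kernel-verified Lean document; each statement's English description precedes it below -/
import Mathlib

section
/- Let A be an abelian group and let Φ, Ψ : P^n → A be simple valuations. If Φ(P) = Ψ(P) for all P ∈ P^n_o, then Φ = Ψ (i.e. a simple valuation on P^n is determined by its values on P^n_o). -/
open MeasureTheory Metric
open scoped RealInnerProductSpace Pointwise

noncomputable section

/-- Euclidean `n`-space. -/
abbrev Eucl (n : ℕ) : Type := EuclideanSpace ℝ (Fin n)

/-- A convex body: a nonempty compact convex subset of `ℝⁿ`. -/
def IsConvexBody {n : ℕ} (K : Set (Eucl n)) : Prop :=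
  K.Nonempty ∧ IsCompact K ∧ Convex ℝ K

/-- A convex body containing the origin. -/
def IsConvexBodyO {n : ℕ} (K : Set (Eucl n)) : Prop :=
  IsConvexBody K ∧ (0 : Eucl n) ∈ K

/-- A convex polytope: the convex hull of a finite nonempty set of points. -/
def IsPolytope {n : ℕ} (P : Set (Eucl n)) : Prop :=
  ∃ S : Finset (Eucl n), S.Nonempty ∧ P = convexHull ℝ (S : Set (Eucl n))

/-- A convex polytope containing the origin. -/
def IsPolytopeO {n : ℕ} (P : Set (Eucl n)) : Prop :=
  IsPolytope P ∧ (0 : Eucl n) ∈ P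

/-- The support function `h(K, u) = sup_{x ∈ K} ⟨x, u⟩`. -/
def suppFn {n : ℕ} (K : Set (Eucl n)) (u : Eucl n) : ℝ :=
  sSup ((fun x => ⟪x, u⟫) '' K)

/-- The dimension of a convex set: the dimension of its affine hull. -/
def setDim {n : ℕ} (P : Set (Eucl n)) : ℕ :=
  Module.finrank ℝ (affineSpan ℝ P).direction

/-- `h(I_p⁺ K, u)^p = max_{x ∈ K} ⟨x, u⟩₊^p`. -/
def IppF {n : ℕ} (p : ℝ) (K : Set (Eucl n)) (u : Eucl n) : ℝ :=
  sSup ((fun x => (max ⟪x, u⟫ 0) ^ p) '' K)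

/-- `h(I_p⁻ K, u)^p = max_{x ∈ K} ⟨x, u⟩₋^p`. -/
def ImpF {n : ℕ} (p : ℝ) (K : Set (Eucl n)) (u : Eucl n) : ℝ :=
  sSup ((fun x => (max (-⟪x, u⟫) 0) ^ p) '' K)

/-- `(J_p⁺ K)(u) = min_{x ∈ K} ⟨x, u⟩₊^p`. -/
def JppF {n : ℕ} (p : ℝ) (K : Set (Eucl n)) (u : Eucl n) : ℝ :=
  sInf ((fun x => (max ⟪x, u⟫ 0) ^ p) '' K)

/-- `(J_p⁻ K)(u) = min_{x ∈ K} ⟨x, u⟩₋^p`. -/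
def JmpF {n : ℕ} (p : ℝ) (K : Set (Eucl n)) (u : Eucl n) : ℝ :=
  sInf ((fun x => (max (-⟪x, u⟫) 0) ^ p) '' K)

/-- The face `F(K, v) = {x ∈ K : ⟨x, v⟩ = h(K, v)}`. -/
def face {n : ℕ} (K : Set (Eucl n)) (v : Eucl n) : Set (Eucl n) :=
  {x ∈ K | ⟪x, v⟫ = suppFn K v}

/-- `h(E_p⁺ K, u)^p = (1/2) Σ_{v ∈ S¹, h(K,v) = 0} max_{x ∈ F(K,v)} ⟨x, u⟩₊^p`. -/
def EppF {n : ℕ} (p : ℝ) (K : Set (Eucl n)) (u : Eucl n) : ℝ :=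
  (1 / 2) * ∑' v : {v : Eucl n // ‖v‖ = 1 ∧ suppFn K v = 0},
    sSup ((fun x => (max ⟪x, u⟫ 0) ^ p) '' face K v.1)

/-- `h(E_p⁻ K, u)^p = (1/2) Σ_{v ∈ S¹, h(K,v) = 0} max_{x ∈ F(K,v)} ⟨x, u⟩₋^p`. -/
def EmpF {n : ℕ} (p : ℝ) (K : Set (Eucl n)) (u : Eucl n) : ℝ :=
  (1 / 2) * ∑' v : {v : Eucl n // ‖v‖ = 1 ∧ suppFn K v = 0},
    sSup ((fun x => (max (-⟪x, u⟫) 0) ^ p) '' face K v.1)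

/-- `(F_p⁺ K)(u) = (1/2) Σ_{v ∈ S¹, h(K,v) = 0} min_{x ∈ F(K,v)} ⟨x, u⟩₊^p`. -/
def FppF {n : ℕ} (p : ℝ) (K : Set (Eucl n)) (u : Eucl n) : ℝ :=
  (1 / 2) * ∑' v : {v : Eucl n // ‖v‖ = 1 ∧ suppFn K v = 0},
    sInf ((fun x => (max ⟪x, u⟫ 0) ^ p) '' face K v.1)

/-- `(F_p⁻ K)(u) = (1/2) Σ_{v ∈ S¹, h(K,v) = 0} min_{x ∈ F(K,v)} ⟨x, u⟩₋^p`. -/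
def FmpF {n : ℕ} (p : ℝ) (K : Set (Eucl n)) (u : Eucl n) : ℝ :=
  (1 / 2) * ∑' v : {v : Eucl n // ‖v‖ = 1 ∧ suppFn K v = 0},
    sInf ((fun x => (max (-⟪x, u⟫) 0) ^ p) '' face K v.1)

/-- The maximum norm over the unit sphere. -/
def sphSup {n : ℕ} (f : Eucl n → ℝ) : ℝ :=
  ⨆ u : Metric.sphere (0 : Eucl n) 1, |f u.1|

/-- The standard simplex `Tⁿ = conv{o, e₁, …, e_n}`. -/
def stdT (n : ℕ) : Set (Eucl n) :=
  convexHull ℝ (insert (0 : Eucl n) (Set.range fun i : Fin n => EuclideanSpace.single i (1 : ℝ)))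

/-- The simplex `T̃ⁿ⁻¹ = conv{e₁, …, e_n}`. -/
def tilT (n : ℕ) : Set (Eucl n) :=
  convexHull ℝ (Set.range fun i : Fin n => EuclideanSpace.single i (1 : ℝ))

section SV
variable {n : ℕ}

lemma sv_inner_combo (u y z : Eucl n) (a b : ℝ) :
    ⟪a • y + b • z, u⟫ = a * ⟪y, u⟫ + b * ⟪z, u⟫ := by
  rw [inner_add_left, real_inner_smul_left, real_inner_smul_left]


lemma sv_halfspace_convex (u : Eucl n) (c : ℝ) : Convex ℝ {y : Eucl n | ⟪y, u⟫ ≤ c} := by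
  intro y hy z hz a b ha hb hab
  simp only [Set.mem_setOf_eq] at *
  rw [sv_inner_combo]
  have h1 := mul_le_mul_of_nonneg_left hy ha
  have h2 := mul_le_mul_of_nonneg_left hz hb
  have h3 : a * c + b * c = c := by rw [← add_mul, hab, one_mul]
  linarith

lemma sv_halfspace_convex_ge (u : Eucl n) (c : ℝ) : Convex ℝ {y : Eucl n | c ≤ ⟪y, u⟫} := by
  intro y hy z hz a b ha hb hab
  simp only [Set.mem_setOf_eq] at *
  rw [sv_inner_combo]
  have h1 := mul_le_mul_of_nonneg_left hy ha
  have h2 := mul_le_mul_of_nonneg_left hz hb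
  have h3 : a * c + b * c = c := by rw [← add_mul, hab, one_mul]
  linarith

lemma sv_halfspace_closed (u : Eucl n) (c : ℝ) : IsClosed {y : Eucl n | ⟪y, u⟫ ≤ c} :=
  isClosed_le (Continuous.inner continuous_id continuous_const) continuous_const

/-- A set inside a hyperplane has dimension < n. -/
lemma sv_setDim_lt {u : Eucl n} (hu : u ≠ 0) {c : ℝ} {P : Set (Eucl n)}
    (hP : P ⊆ {y | ⟪y, u⟫ = c}) (hn : 1 ≤ n) : setDim P < n := by
  classical
  set f : Eucl n →ₗ[ℝ] ℝ :=
    { toFun := fun y => ⟪y, u⟫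
      map_add' := fun x y => inner_add_left x y u
      map_smul' := fun a x => real_inner_smul_left x u a }
  have hker : Module.finrank ℝ (LinearMap.ker f) + 1 = n := by
    have hrange : LinearMap.range f = ⊤ := by
      rw [LinearMap.range_eq_top]
      intro r
      refine ⟨(r / ⟪u, u⟫) • u, ?_⟩
      have hn0 : ‖u‖ ≠ 0 := norm_ne_zero_iff.2 hu
      have hu2 : ⟪u, u⟫ ≠ 0 := by
        rw [real_inner_self_eq_norm_mul_norm]; exact mul_ne_zero hn0 hn0
      show ⟪(r / ⟪u, u⟫) • u, u⟫ = r
      rw [real_inner_smul_left, div_mul_cancel₀ _ hu2]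
    have := LinearMap.finrank_range_add_finrank_ker f
    rw [hrange, finrank_top] at this
    have h1 : Module.finrank ℝ ℝ = 1 := Module.finrank_self ℝ
    have h2 : Module.finrank ℝ (Eucl n) = n := finrank_euclideanSpace_fin
    omega
  have hdir : (affineSpan ℝ P).direction ≤ LinearMap.ker f := by
    rw [direction_affineSpan]
    rw [vectorSpan_def]
    rw [Submodule.span_le]
    rintro v ⟨x, hx, y, hy, rfl⟩
    have hx' : ⟪x, u⟫ = c := hP hx
    have hy' : ⟪y, u⟫ = c := hP hy
    simp only [SetLike.mem_coe, LinearMap.mem_ker]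
    show ⟪x - y, u⟫ = 0
    rw [inner_sub_left, hx', hy', sub_self]
  have hle : setDim P ≤ Module.finrank ℝ (LinearMap.ker f) := Submodule.finrank_mono hdir
  omega


/-- crossing point of the segment `[a,b]` with the hyperplane `⟪·,u⟫ = c`. -/
def qpt (u : Eucl n) (c : ℝ) (a b : Eucl n) : Eucl n :=
  ((⟪b, u⟫ - c) / (⟪b, u⟫ - ⟪a, u⟫)) • a + ((c - ⟪a, u⟫) / (⟪b, u⟫ - ⟪a, u⟫)) • b

lemma sv_qpt_alg {fa fb c : ℝ} (h : fa < fb) :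
    ((fb - c) / (fb - fa)) * fa + ((c - fa) / (fb - fa)) * fb = c ∧
    (c - fa) / (fb - fa) = 1 - (fb - c) / (fb - fa) := by
  have hne : fb - fa ≠ 0 := by linarith
  constructor
  · field_simp
    ring
  · field_simp
    ring

lemma qpt_spec {u : Eucl n} {c : ℝ} {a b : Eucl n} (ha : ⟪a, u⟫ < c) (hb : c < ⟪b, u⟫) :
    0 < (⟪b, u⟫ - c) / (⟪b, u⟫ - ⟪a, u⟫) ∧ (⟪b, u⟫ - c) / (⟪b, u⟫ - ⟪a, u⟫) < 1 ∧
    qpt u c a b = ((⟪b, u⟫ - c) / (⟪b, u⟫ - ⟪a, u⟫)) • a +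
      (1 - (⟪b, u⟫ - c) / (⟪b, u⟫ - ⟪a, u⟫)) • b ∧
    ⟪qpt u c a b, u⟫ = c := by
  have hd : 0 < ⟪b, u⟫ - ⟪a, u⟫ := by linarith
  obtain ⟨hval, hcoeff⟩ := sv_qpt_alg (c := c) (by linarith : ⟪a, u⟫ < ⟪b, u⟫)
  refine ⟨div_pos (by linarith) hd, (div_lt_one hd).2 (by linarith), ?_, ?_⟩
  · rw [qpt, hcoeff]
  · rw [qpt, sv_inner_combo]
    exact hval

lemma sv_combo_mem {ι : Type*} (G : Finset (Eucl n)) (t : Finset ι) (w : ι → ℝ)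
    (z : ι → Eucl n) (hw0 : ∀ i ∈ t, 0 ≤ w i) (hw1 : ∑ i ∈ t, w i = 1)
    (hmem : ∀ i ∈ t, w i ≠ 0 → z i ∈ (↑G : Set (Eucl n))) :
    ∑ i ∈ t, w i • z i ∈ convexHull ℝ (↑G : Set (Eucl n)) := by
  classical
  set t' := t.filter fun i => w i ≠ 0 with ht'
  have hsub : t' ⊆ t := Finset.filter_subset _ _
  have hw0' : ∀ i, i ∉ t' → i ∈ t → w i = 0 := by
    intro i hni hi
    by_contra hne
    exact hni (Finset.mem_filter.2 ⟨hi, hne⟩)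
  have hsum : ∑ i ∈ t', w i = 1 := by
    rw [← hw1]
    apply Finset.sum_subset hsub
    intro i hi hni
    exact hw0' i hni hi
  have hsumv : ∑ i ∈ t', w i • z i = ∑ i ∈ t, w i • z i := by
    apply Finset.sum_subset hsub
    intro i hi hni
    rw [hw0' i hni hi, zero_smul]
  rw [← hsumv, ← Finset.centerMass_eq_of_sum_1 t' z hsum]
  exact Finset.centerMass_mem_convexHull t' (fun i hi => hw0 i (hsub hi))
    (by rw [hsum]; norm_num)
    (fun i hi => hmem i (hsub hi) (Finset.mem_filter.1 hi).2)

lemma sv_sum_pair {ι : Type*} [DecidableEq ι] {M : Type*} [AddCommMonoid M]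
    (t : Finset ι) {i0 i1 : ι} (h0 : i0 ∈ t) (h1 : i1 ∈ t) (hne : i0 ≠ i1) (f : ι → M) :
    ∑ x ∈ t, f x = f i0 + (f i1 + ∑ x ∈ (t.erase i0).erase i1, f x) := by
  rw [← Finset.add_sum_erase t f h0,
    ← Finset.add_sum_erase _ f (Finset.mem_erase.2 ⟨fun h => hne h.symm, h1⟩)]

lemma sv_cut_induction (u : Eucl n) (c : ℝ) (G B : Finset (Eucl n))
    (hG : ∀ y ∈ G, ⟪y, u⟫ ≤ c) (hB : ∀ y ∈ B, c < ⟪y, u⟫)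
    (hq : ∀ a ∈ G, ⟪a, u⟫ < c → ∀ b ∈ B, qpt u c a b ∈ G) :
    ∀ (k : ℕ) {ι : Type*} (t : Finset ι) (w : ι → ℝ) (z : ι → Eucl n),
      (∀ i ∈ t, 0 ≤ w i) → (∑ i ∈ t, w i) = 1 →
      (∀ i ∈ t, z i ∈ (↑G : Set (Eucl n)) ∪ ↑B) →
      ⟪∑ i ∈ t, w i • z i, u⟫ ≤ c →
      (t.filter fun i => w i ≠ 0 ∧ ⟪z i, u⟫ ≠ c).card ≤ k →
      ∑ i ∈ t, w i • z i ∈ convexHull ℝ (↑G : Set (Eucl n)) := by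
  classical
  intro k
  induction k with
  | zero =>
    intro ι t w z hw0 hw1 hmem hval hcard
    apply sv_combo_mem G t w z hw0 hw1
    intro i hi hwi
    rcases hmem i hi with h | h
    · exact h
    · exfalso
      have hfc : ⟪z i, u⟫ ≠ c := ne_of_gt (hB _ h)
      have : i ∈ t.filter fun i => w i ≠ 0 ∧ ⟪z i, u⟫ ≠ c :=
        Finset.mem_filter.2 ⟨hi, hwi, hfc⟩
      have := Finset.card_pos.2 ⟨i, this⟩
      omega
  | succ k ih =>
    intro ι t w z hw0 hw1 hmem hval hcard
    by_cases hbad : ∃ i ∈ t, w i ≠ 0 ∧ c < ⟪z i, u⟫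
    · obtain ⟨i0, hi0t, hwi0, hfb⟩ := hbad
      have hex : ∃ i ∈ t, w i ≠ 0 ∧ ⟪z i, u⟫ < c := by
        by_contra hno
        push_neg at hno
        have hsum : ⟪∑ i ∈ t, w i • z i, u⟫ = ∑ i ∈ t, w i * ⟪z i, u⟫ := by
          rw [sum_inner]
          exact Finset.sum_congr rfl fun i _ => real_inner_smul_left _ _ _
        have hlt : ∑ i ∈ t, w i * c < ∑ i ∈ t, w i * ⟪z i, u⟫ := by
          apply Finset.sum_lt_sum
          · intro i hi
            rcases eq_or_ne (w i) 0 with h | h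
            · simp [h]
            · exact mul_le_mul_of_nonneg_left (hno i hi h) (hw0 i hi)
          · exact ⟨i0, hi0t,
              mul_lt_mul_of_pos_left hfb ((hw0 i0 hi0t).lt_of_ne (Ne.symm hwi0))⟩
        rw [← Finset.sum_mul, hw1, one_mul] at hlt
        rw [hsum] at hval
        linarith
      obtain ⟨i1, hi1t, hwi1, hfa⟩ := hex
      have hne01 : i0 ≠ i1 := by
        rintro rfl
        linarith
      set a := z i1 with hadef
      set b := z i0 with hbdef
      have haG : a ∈ G := by
        rcases hmem i1 hi1t with h | h
        · exact Finset.mem_coe.1 h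
        · exact absurd (hB _ (Finset.mem_coe.1 h)) (not_lt.2 hfa.le)
      have hbB : b ∈ B := by
        rcases hmem i0 hi0t with h | h
        · exact absurd (hG _ (Finset.mem_coe.1 h)) (not_le.2 hfb)
        · exact Finset.mem_coe.1 h
      obtain ⟨ht0pos, ht0lt, hqcombo, hqval⟩ := qpt_spec hfa hfb
      set t0 := (⟪b, u⟫ - c) / (⟪b, u⟫ - ⟪a, u⟫) with ht0def
      set q := qpt u c a b with hqdef
      have hqG : q ∈ G := hq a haG hfa b hbB
      have h1t0 : 0 < 1 - t0 := by linarith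
      have hwi1pos : 0 < w i1 := (hw0 i1 hi1t).lt_of_ne (Ne.symm hwi1)
      have hwi0pos : 0 < w i0 := (hw0 i0 hi0t).lt_of_ne (Ne.symm hwi0)
      rcases le_total (w i1 / t0) (w i0 / (1 - t0)) with hcase | hcase
      · -- the mass at `i1` is exhausted first
        set ω := w i1 / t0 with hωdef
        have hωpos : 0 < ω := div_pos hwi1pos ht0pos
        have hωt0 : ω * t0 = w i1 := div_mul_cancel₀ _ (ne_of_gt ht0pos)
        have hwi0' : 0 ≤ w i0 - ω * (1 - t0) := by
          have := (le_div_iff₀ h1t0).1 hcase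
          linarith
        set w' := Function.update (Function.update w i1 ω) i0 (w i0 - ω * (1 - t0)) with hw'
        set z' := Function.update z i1 q with hz'
        have hw'i0 : w' i0 = w i0 - ω * (1 - t0) := by
          rw [hw', Function.update_self]
        have hw'i1 : w' i1 = ω := by
          rw [hw', Function.update_of_ne hne01.symm, Function.update_self]
        have hw'o : ∀ j, j ≠ i0 → j ≠ i1 → w' j = w j := by
          intro j hj0 hj1
          rw [hw', Function.update_of_ne hj0, Function.update_of_ne hj1]
        have hz'i1 : z' i1 = q := by rw [hz', Function.update_self]
        have hz'o : ∀ j, j ≠ i1 → z' j = z j := by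
          intro j hj1
          rw [hz', Function.update_of_ne hj1]
        have hrest : ∀ x ∈ (t.erase i0).erase i1, x ≠ i0 ∧ x ≠ i1 := by
          intro x hx
          obtain ⟨hx1, hx0⟩ := Finset.mem_erase.1 hx
          exact ⟨(Finset.mem_erase.1 hx0).1, hx1⟩
        have hsplit : ω = ω * t0 + ω * (1 - t0) := by ring
        have hsumw : ∑ i ∈ t, w' i = ∑ i ∈ t, w i := by
          rw [sv_sum_pair t hi0t hi1t hne01 w', sv_sum_pair t hi0t hi1t hne01 w,
            Finset.sum_congr rfl fun x hx => hw'o x (hrest x hx).1 (hrest x hx).2,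
            hw'i0, hw'i1]
          linarith
        have hsumv : ∑ j ∈ t, w' j • z' j = ∑ j ∈ t, w j • z j := by
          rw [sv_sum_pair t hi0t hi1t hne01 (fun j => w' j • z' j),
            sv_sum_pair t hi0t hi1t hne01 (fun j => w j • z j),
            Finset.sum_congr rfl fun x hx => by
              rw [hw'o x (hrest x hx).1 (hrest x hx).2, hz'o x (hrest x hx).2]]
          simp only [hw'i0, hw'i1, hz'i1, hz'o _ hne01]
          rw [hqcombo, ← hωt0]
          module
        rw [← hsumv]
        apply ih t w' z'
        · intro i hi
          rcases eq_or_ne i i0 with rfl | hj0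
          · rw [hw'i0]; exact hwi0'
          rcases eq_or_ne i i1 with rfl | hj1
          · rw [hw'i1]; exact hωpos.le
          · rw [hw'o _ hj0 hj1]; exact hw0 i hi
        · rw [hsumw]; exact hw1
        · intro i hi
          rcases eq_or_ne i i1 with rfl | hj1
          · rw [hz'i1]; exact Set.mem_union_left _ (Finset.mem_coe.2 hqG)
          · rw [hz'o _ hj1]; exact hmem i hi
        · rw [hsumv]; exact hval
        · have hsubf : (t.filter fun i => w' i ≠ 0 ∧ ⟪z' i, u⟫ ≠ c) ⊆
              (t.filter fun i => w i ≠ 0 ∧ ⟪z i, u⟫ ≠ c).erase i1 := by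
            intro j hj
            obtain ⟨hjt, hjw, hjz⟩ := Finset.mem_filter.1 hj
            rcases eq_or_ne j i1 with rfl | hj1
            · exact absurd (by rw [hz'i1]; exact hqval) hjz
            rcases eq_or_ne j i0 with rfl | hj0
            · exact Finset.mem_erase.2 ⟨hne01, Finset.mem_filter.2
                ⟨hjt, hwi0, ne_of_gt hfb⟩⟩
            · exact Finset.mem_erase.2 ⟨hj1, Finset.mem_filter.2
                ⟨hjt, by rwa [hw'o _ hj0 hj1] at hjw, by rwa [hz'o _ hj1] at hjz⟩⟩
          have hi1f : i1 ∈ t.filter fun i => w i ≠ 0 ∧ ⟪z i, u⟫ ≠ c :=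
            Finset.mem_filter.2 ⟨hi1t, hwi1, ne_of_lt hfa⟩
          have h1 := Finset.card_le_card hsubf
          rw [Finset.card_erase_of_mem hi1f] at h1
          have h2 := Finset.card_pos.2 ⟨i1, hi1f⟩
          omega
      · -- the mass at `i0` is exhausted first
        set ω := w i0 / (1 - t0) with hωdef
        have hωpos : 0 < ω := div_pos hwi0pos h1t0
        have hωt0 : ω * (1 - t0) = w i0 := div_mul_cancel₀ _ (ne_of_gt h1t0)
        have hwi1' : 0 ≤ w i1 - ω * t0 := by
          have := (le_div_iff₀ ht0pos).1 hcase
          linarith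
        set w' := Function.update (Function.update w i1 (w i1 - ω * t0)) i0 ω with hw'
        set z' := Function.update z i0 q with hz'
        have hw'i0 : w' i0 = ω := by
          rw [hw', Function.update_self]
        have hw'i1 : w' i1 = w i1 - ω * t0 := by
          rw [hw', Function.update_of_ne hne01.symm, Function.update_self]
        have hw'o : ∀ j, j ≠ i0 → j ≠ i1 → w' j = w j := by
          intro j hj0 hj1
          rw [hw', Function.update_of_ne hj0, Function.update_of_ne hj1]
        have hz'i0 : z' i0 = q := by rw [hz', Function.update_self]
        have hz'o : ∀ j, j ≠ i0 → z' j = z j := by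
          intro j hj0
          rw [hz', Function.update_of_ne hj0]
        have hrest : ∀ x ∈ (t.erase i0).erase i1, x ≠ i0 ∧ x ≠ i1 := by
          intro x hx
          obtain ⟨hx1, hx0⟩ := Finset.mem_erase.1 hx
          exact ⟨(Finset.mem_erase.1 hx0).1, hx1⟩
        have hsplit : ω = ω * t0 + ω * (1 - t0) := by ring
        have hsumw : ∑ i ∈ t, w' i = ∑ i ∈ t, w i := by
          rw [sv_sum_pair t hi0t hi1t hne01 w', sv_sum_pair t hi0t hi1t hne01 w,
            Finset.sum_congr rfl fun x hx => hw'o x (hrest x hx).1 (hrest x hx).2,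
            hw'i0, hw'i1]
          linarith
        have hsumv : ∑ j ∈ t, w' j • z' j = ∑ j ∈ t, w j • z j := by
          rw [sv_sum_pair t hi0t hi1t hne01 (fun j => w' j • z' j),
            sv_sum_pair t hi0t hi1t hne01 (fun j => w j • z j),
            Finset.sum_congr rfl fun x hx => by
              rw [hw'o x (hrest x hx).1 (hrest x hx).2, hz'o x (hrest x hx).1]]
          simp only [hw'i0, hw'i1, hz'i0, hz'o _ hne01.symm]
          rw [hqcombo, ← hωt0]
          module
        rw [← hsumv]
        apply ih t w' z'
        · intro i hi
          rcases eq_or_ne i i0 with rfl | hj0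
          · rw [hw'i0]; exact hωpos.le
          rcases eq_or_ne i i1 with rfl | hj1
          · rw [hw'i1]; exact hwi1'
          · rw [hw'o _ hj0 hj1]; exact hw0 i hi
        · rw [hsumw]; exact hw1
        · intro i hi
          rcases eq_or_ne i i0 with rfl | hj0
          · rw [hz'i0]; exact Set.mem_union_left _ (Finset.mem_coe.2 hqG)
          · rw [hz'o _ hj0]; exact hmem i hi
        · rw [hsumv]; exact hval
        · have hsubf : (t.filter fun i => w' i ≠ 0 ∧ ⟪z' i, u⟫ ≠ c) ⊆
              (t.filter fun i => w i ≠ 0 ∧ ⟪z i, u⟫ ≠ c).erase i0 := by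
            intro j hj
            obtain ⟨hjt, hjw, hjz⟩ := Finset.mem_filter.1 hj
            rcases eq_or_ne j i0 with rfl | hj0
            · exact absurd (by rw [hz'i0]; exact hqval) hjz
            rcases eq_or_ne j i1 with rfl | hj1
            · exact Finset.mem_erase.2 ⟨hne01.symm, Finset.mem_filter.2
                ⟨hjt, hwi1, ne_of_lt hfa⟩⟩
            · exact Finset.mem_erase.2 ⟨hj0, Finset.mem_filter.2
                ⟨hjt, by rwa [hw'o _ hj0 hj1] at hjw, by rwa [hz'o _ hj0] at hjz⟩⟩
          have hi0f : i0 ∈ t.filter fun i => w i ≠ 0 ∧ ⟪z i, u⟫ ≠ c :=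
            Finset.mem_filter.2 ⟨hi0t, hwi0, ne_of_gt hfb⟩
          have h1 := Finset.card_le_card hsubf
          rw [Finset.card_erase_of_mem hi0f] at h1
          have h2 := Finset.card_pos.2 ⟨i0, hi0f⟩
          omega
    · push_neg at hbad
      apply sv_combo_mem G t w z hw0 hw1
      intro i hi hwi
      rcases hmem i hi with h | h
      · exact h
      · exact absurd (hB _ (Finset.mem_coe.1 h)) (not_lt.2 (hbad i hi hwi))

lemma qpt_spec' {u : Eucl n} {c : ℝ} {a b : Eucl n} (ha : ⟪a, u⟫ ≤ c) (hb : c < ⟪b, u⟫) :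
    ⟪qpt u c a b, u⟫ = c ∧ qpt u c a b ∈ segment ℝ a b := by
  have hd : 0 < ⟪b, u⟫ - ⟪a, u⟫ := by linarith
  obtain ⟨hval, hcoeff⟩ := sv_qpt_alg (c := c) (by linarith : ⟪a, u⟫ < ⟪b, u⟫)
  constructor
  · rw [qpt, sv_inner_combo]
    exact hval
  · refine ⟨(⟪b, u⟫ - c) / (⟪b, u⟫ - ⟪a, u⟫), (c - ⟪a, u⟫) / (⟪b, u⟫ - ⟪a, u⟫),
      div_nonneg (by linarith) hd.le, div_nonneg (by linarith) hd.le, ?_, rfl⟩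
    rw [hcoeff]
    ring

lemma sv_isPolytope_inter_le {P : Set (Eucl n)} (hP : IsPolytope P) (u : Eucl n) (c : ℝ)
    (hne : (P ∩ {y | ⟪y, u⟫ ≤ c}).Nonempty) : IsPolytope (P ∩ {y | ⟪y, u⟫ ≤ c}) := by
  classical
  obtain ⟨S, hSne, rfl⟩ := hP
  set A := S.filter (fun s => ⟪s, u⟫ ≤ c) with hA
  set B := S.filter (fun s => c < ⟪s, u⟫) with hB
  set M := (A ×ˢ B).image (fun pr => qpt u c pr.1 pr.2) with hM
  have hGmem : ∀ y ∈ A ∪ M, ⟪y, u⟫ ≤ c := by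
    intro y hy
    rcases Finset.mem_union.1 hy with hy | hy
    · exact (Finset.mem_filter.1 hy).2
    · obtain ⟨pr, hpr, rfl⟩ := Finset.mem_image.1 hy
      obtain ⟨hpa, hpb⟩ := Finset.mem_product.1 hpr
      exact le_of_eq (qpt_spec' (Finset.mem_filter.1 hpa).2 (Finset.mem_filter.1 hpb).2).1
  have hGsub : (↑(A ∪ M) : Set (Eucl n)) ⊆ convexHull ℝ (↑S : Set (Eucl n)) ∩ {y | ⟪y, u⟫ ≤ c} := by
    intro y hy
    have hy' := Finset.mem_coe.1 hy
    refine ⟨?_, hGmem y hy'⟩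
    rcases Finset.mem_union.1 hy' with hy'' | hy''
    · exact subset_convexHull ℝ _ (Finset.mem_coe.2 (Finset.mem_filter.1 hy'').1)
    · obtain ⟨pr, hpr, rfl⟩ := Finset.mem_image.1 hy''
      obtain ⟨hpa, hpb⟩ := Finset.mem_product.1 hpr
      have h1 : (pr.1 : Eucl n) ∈ convexHull ℝ (↑S : Set (Eucl n)) :=
        subset_convexHull ℝ _ (Finset.mem_coe.2 (Finset.mem_filter.1 hpa).1)
      have h2 : (pr.2 : Eucl n) ∈ convexHull ℝ (↑S : Set (Eucl n)) :=
        subset_convexHull ℝ _ (Finset.mem_coe.2 (Finset.mem_filter.1 hpb).1)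
      exact (convex_convexHull ℝ _).segment_subset h1 h2
        (qpt_spec' (Finset.mem_filter.1 hpa).2 (Finset.mem_filter.1 hpb).2).2
  have hEq : convexHull ℝ (↑S : Set (Eucl n)) ∩ {y | ⟪y, u⟫ ≤ c}
      = convexHull ℝ (↑(A ∪ M) : Set (Eucl n)) := by
    apply Set.Subset.antisymm
    · rintro x ⟨hxP, hxH⟩
      rw [Finset.convexHull_eq] at hxP
      obtain ⟨w, hw0, hw1, hcm⟩ := hxP
      rw [Finset.centerMass_eq_of_sum_1 _ _ hw1] at hcm
      simp only [id] at hcm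
      rw [← hcm]
      apply sv_cut_induction u c (A ∪ M) B hGmem
        (fun y hy => (Finset.mem_filter.1 hy).2) ?_ S.card S w (fun y => y) hw0 hw1 ?_ ?_ ?_
      · intro a haG hfa b hbB
        have haA : a ∈ A := by
          rcases Finset.mem_union.1 haG with h | h
          · exact h
          · exfalso
            obtain ⟨pr, hpr, rfl⟩ := Finset.mem_image.1 h
            obtain ⟨hpa, hpb⟩ := Finset.mem_product.1 hpr
            exact absurd (qpt_spec' (Finset.mem_filter.1 hpa).2 (Finset.mem_filter.1 hpb).2).1
              (ne_of_lt hfa)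
        exact Finset.mem_union.2 (Or.inr (Finset.mem_image.2 ⟨(a, b),
          Finset.mem_product.2 ⟨haA, hbB⟩, rfl⟩))
      · intro i hi
        by_cases h : ⟪i, u⟫ ≤ c
        · exact Set.mem_union_left _ (Finset.mem_coe.2
            (Finset.mem_union.2 (Or.inl (Finset.mem_filter.2 ⟨hi, h⟩))))
        · exact Set.mem_union_right _ (Finset.mem_coe.2
            (Finset.mem_filter.2 ⟨hi, not_le.1 h⟩))
      · rw [hcm]; exact hxH
      · exact le_trans (Finset.card_filter_le _ _) le_rfl
    · exact subset_trans (convexHull_min hGsub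
        ((convex_convexHull ℝ _).inter (sv_halfspace_convex u c))) le_rfl
  refine ⟨A ∪ M, ?_, hEq⟩
  by_contra hempty
  rw [Finset.not_nonempty_iff_eq_empty] at hempty
  rw [hEq, hempty] at hne
  simp at hne

lemma sv_ge_eq_le (u : Eucl n) (c : ℝ) :
    {y : Eucl n | c ≤ ⟪y, u⟫} = {y : Eucl n | ⟪y, -u⟫ ≤ -c} := by
  ext y
  simp only [Set.mem_setOf_eq, inner_neg_right]
  constructor <;> intro h <;> linarith

lemma sv_isPolytope_inter_ge {P : Set (Eucl n)} (hP : IsPolytope P) (u : Eucl n) (c : ℝ)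
    (hne : (P ∩ {y | c ≤ ⟪y, u⟫}).Nonempty) : IsPolytope (P ∩ {y | c ≤ ⟪y, u⟫}) := by
  rw [sv_ge_eq_le] at hne ⊢
  exact sv_isPolytope_inter_le hP (-u) (-c) hne

lemma sv_isPolytope_inter_eq {P : Set (Eucl n)} (hP : IsPolytope P) (u : Eucl n) (c : ℝ)
    (hne : (P ∩ {y | ⟪y, u⟫ = c}).Nonempty) : IsPolytope (P ∩ {y | ⟪y, u⟫ = c}) := by
  have hsplit : P ∩ {y | ⟪y, u⟫ = c} = (P ∩ {y | ⟪y, u⟫ ≤ c}) ∩ {y | c ≤ ⟪y, u⟫} := by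
    ext y
    simp only [Set.mem_inter_iff, Set.mem_setOf_eq]
    constructor
    · rintro ⟨h1, h2⟩; exact ⟨⟨h1, h2.le⟩, h2.ge⟩
    · rintro ⟨⟨h1, h2⟩, h3⟩; exact ⟨h1, le_antisymm h2 h3⟩
  rw [hsplit] at hne ⊢
  have h1 : (P ∩ {y | ⟪y, u⟫ ≤ c}).Nonempty :=
    hne.mono (Set.inter_subset_left)
  exact sv_isPolytope_inter_ge (sv_isPolytope_inter_le hP u c h1) u c hne

/-- finite intersections of half-spaces, as a list. -/
def InterL (l : List (Eucl n × ℝ)) : Set (Eucl n) := {y | ∀ p ∈ l, ⟪y, p.1⟫ ≤ p.2}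

lemma InterL_nil : InterL ([] : List (Eucl n × ℝ)) = Set.univ := by
  ext y; simp [InterL]

lemma InterL_cons (p : Eucl n × ℝ) (l : List (Eucl n × ℝ)) :
    InterL (p :: l) = {y : Eucl n | ⟪y, p.1⟫ ≤ p.2} ∩ InterL l := by
  ext y
  simp only [InterL, Set.mem_inter_iff, Set.mem_setOf_eq, List.mem_cons]
  constructor
  · intro h; exact ⟨h p (Or.inl rfl), fun p' hp' => h p' (Or.inr hp')⟩
  · rintro ⟨h1, h2⟩ p' hp'
    rcases hp' with rfl | hp'
    · exact h1
    · exact h2 p' hp'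

lemma sv_isPolytope_interL {P : Set (Eucl n)} (hP : IsPolytope P) (l : List (Eucl n × ℝ))
    (hne : (P ∩ InterL l).Nonempty) : IsPolytope (P ∩ InterL l) := by
  induction l generalizing P with
  | nil => rw [InterL_nil, Set.inter_univ] at hne ⊢; exact hP
  | cons p l ih =>
    have hassoc : P ∩ InterL (p :: l) = (P ∩ {y | ⟪y, p.1⟫ ≤ p.2}) ∩ InterL l := by
      rw [InterL_cons, Set.inter_assoc]
    rw [hassoc] at hne ⊢
    exact ih (sv_isPolytope_inter_le hP p.1 p.2 (hne.mono Set.inter_subset_left)) hne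

/-- The linear functional `⟪·, u⟫`. -/
def svLin (u : Eucl n) : Eucl n →ₗ[ℝ] ℝ where
  toFun := fun y => ⟪y, u⟫
  map_add' := fun x y => inner_add_left x y u
  map_smul' := fun a x => real_inner_smul_left x u a

@[simp] lemma svLin_apply (u y : Eucl n) : svLin u y = ⟪y, u⟫ := rfl

lemma sv_finrank_ker {u : Eucl n} (hu : u ≠ 0) :
    Module.finrank ℝ (LinearMap.ker (svLin u)) + 1 = n := by
  have hrange : LinearMap.range (svLin u) = ⊤ := by
    rw [LinearMap.range_eq_top]
    intro r
    have hn0 : ‖u‖ ≠ 0 := norm_ne_zero_iff.2 hu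
    have hu2 : ⟪u, u⟫ ≠ 0 := by
      rw [real_inner_self_eq_norm_mul_norm]; exact mul_ne_zero hn0 hn0
    refine ⟨(r / ⟪u, u⟫) • u, ?_⟩
    show ⟪(r / ⟪u, u⟫) • u, u⟫ = r
    rw [real_inner_smul_left, div_mul_cancel₀ _ hu2]
  have h0 := LinearMap.finrank_range_add_finrank_ker (svLin u)
  rw [hrange, finrank_top] at h0
  have h1 : Module.finrank ℝ ℝ = 1 := Module.finrank_self ℝ
  have h2 : Module.finrank ℝ (Eucl n) = n := finrank_euclideanSpace_fin
  omega

lemma sv_hyperplane_carrier {u : Eucl n} {c : ℝ} {p0 : Eucl n} (hp0 : ⟪p0, u⟫ = c) :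
    {y : Eucl n | ⟪y, u⟫ = c}
      = (AffineSubspace.mk' p0 (LinearMap.ker (svLin u)) : Set (Eucl n)) := by
  ext y
  rw [SetLike.mem_coe, AffineSubspace.mem_mk']
  simp only [Set.mem_setOf_eq, vsub_eq_sub, LinearMap.mem_ker, svLin_apply, inner_sub_left]
  constructor
  · intro h; rw [h, hp0, sub_self]
  · intro h; linarith [hp0]

/-- terminal step of the tilting procedure. -/
lemma sv_tilt_terminal (hn : 1 ≤ n) {S : Finset (Eucl n)} {x u : Eucl n} {c : ℝ}
    (hle : ∀ s ∈ S, ⟪s, u⟫ ≤ c) (hx : c < ⟪x, u⟫)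
    (hterm : affineSpan ℝ
      (insert x (↑(S.filter fun s => ⟪s, u⟫ = c) : Set (Eucl n))) = ⊤) :
    {y : Eucl n | ⟪y, u⟫ = c}
      = (affineSpan ℝ (↑(S.filter fun s => ⟪s, u⟫ = c) : Set (Eucl n)) : Set (Eucl n)) := by
  classical
  set T := S.filter fun s => ⟪s, u⟫ = c with hT
  -- T is nonempty
  have hTne : T.Nonempty := by
    by_contra hTe
    rw [Finset.not_nonempty_iff_eq_empty] at hTe
    rw [hTe] at hterm
    have hxspan : affineSpan ℝ ({x} : Set (Eucl n)) = ⊤ := by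
      rw [← hterm]; congr 1; simp
    have h1 : (affineSpan ℝ ({x} : Set (Eucl n))).direction = ⊥ := by
      rw [direction_affineSpan, vectorSpan_singleton]
    have h4 : Module.finrank ℝ (affineSpan ℝ ({x} : Set (Eucl n))).direction = n := by
      rw [hxspan, AffineSubspace.direction_top, finrank_top]
      exact finrank_euclideanSpace_fin
    rw [h1] at h4
    rw [finrank_bot ℝ (Eucl n)] at h4
    omega
  obtain ⟨t0, ht0T⟩ := hTne
  have ht0c : ⟪t0, u⟫ = c := (Finset.mem_filter.1 ht0T).2
  have hu : u ≠ 0 := by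
    rintro rfl
    rw [inner_zero_right] at hx
    obtain ⟨s, hs⟩ : S.Nonempty := ⟨t0, (Finset.mem_filter.1 ht0T).1⟩
    have := hle s hs
    rw [inner_zero_right] at this
    linarith
  have hker := sv_finrank_ker hu
  -- direction of affine span of T is contained in ker
  have hdirle : (affineSpan ℝ (↑T : Set (Eucl n))).direction ≤ LinearMap.ker (svLin u) := by
    rw [direction_affineSpan, vectorSpan_def, Submodule.span_le]
    rintro v ⟨y1, hy1, y2, hy2, rfl⟩
    have h1 : ⟪y1, u⟫ = c := (Finset.mem_filter.1 hy1).2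
    have h2 : ⟪y2, u⟫ = c := (Finset.mem_filter.1 hy2).2
    simp only [SetLike.mem_coe, LinearMap.mem_ker, svLin_apply, vsub_eq_sub, inner_sub_left]
    rw [h1, h2, sub_self]
  -- direction of affine span of T has dimension ≥ n - 1
  have ht0span : t0 ∈ affineSpan ℝ (↑T : Set (Eucl n)) := mem_affineSpan ℝ (Finset.mem_coe.2 ht0T)
  have hinsert : affineSpan ℝ (insert x (↑(affineSpan ℝ (↑T : Set (Eucl n))) : Set (Eucl n)))
      = affineSpan ℝ (insert x (↑T : Set (Eucl n))) := affineSpan_insert_affineSpan ℝ x _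
  have hdir : (affineSpan ℝ (insert x (↑T : Set (Eucl n)))).direction
      = Submodule.span ℝ {x -ᵥ t0} ⊔ (affineSpan ℝ (↑T : Set (Eucl n))).direction := by
    rw [← hinsert]
    exact AffineSubspace.direction_affineSpan_insert ht0span
  have hfrk : n ≤ 1 + Module.finrank ℝ (affineSpan ℝ (↑T : Set (Eucl n))).direction := by
    have h1 : Module.finrank ℝ ((affineSpan ℝ (insert x (↑T : Set (Eucl n)))).direction) = n := by
      rw [hterm, AffineSubspace.direction_top, finrank_top]
      exact finrank_euclideanSpace_fin
    have h2 := Submodule.finrank_sup_add_finrank_inf_eq (Submodule.span ℝ {x -ᵥ t0})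
      ((affineSpan ℝ (↑T : Set (Eucl n))).direction)
    have h3 : Module.finrank ℝ (Submodule.span ℝ ({x -ᵥ t0} : Set (Eucl n))) ≤ 1 := by
      rcases eq_or_ne (x -ᵥ t0) 0 with h | h
      · rw [h, Submodule.span_zero_singleton, finrank_bot]
        omega
      · rw [finrank_span_singleton h]
    rw [hdir] at h1
    omega
  -- hence the direction equals the kernel
  have hdireq : (affineSpan ℝ (↑T : Set (Eucl n))).direction = LinearMap.ker (svLin u) := by
    apply Submodule.eq_of_le_of_finrank_le hdirle
    omega
  -- conclude
  have hcar := sv_hyperplane_carrier ht0c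
  have hsub : AffineSubspace.mk' t0 (LinearMap.ker (svLin u)) = affineSpan ℝ (↑T : Set (Eucl n)) := by
    apply AffineSubspace.ext_of_direction_eq
    · rw [AffineSubspace.direction_mk', hdireq]
    · exact ⟨t0, AffineSubspace.self_mem_mk' t0 _, ht0span⟩
  rw [hcar, hsub]

/-- One tilting step: if the touching set together with `x` does not affinely span,
we can tilt the half-space to touch strictly more points of `S`. -/
lemma sv_tilt_step {S : Finset (Eucl n)}
    (hspan : affineSpan ℝ (↑S : Set (Eucl n)) = ⊤) (x u : Eucl n) (c : ℝ)
    (hle : ∀ s ∈ S, ⟪s, u⟫ ≤ c) (hx : c < ⟪x, u⟫)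
    (hterm : ¬ (affineSpan ℝ
      (insert x (↑(S.filter fun s => ⟪s, u⟫ = c) : Set (Eucl n))) = ⊤)) :
    ∃ (u' : Eucl n) (c' : ℝ), (∀ s ∈ S, ⟪s, u'⟫ ≤ c') ∧ c' < ⟪x, u'⟫ ∧
      (S.filter fun s => ⟪s, u'⟫ < c').card < (S.filter fun s => ⟪s, u⟫ < c).card := by
  classical
  set T := S.filter fun s => ⟪s, u⟫ = c with hT
  set M' := affineSpan ℝ (insert x (↑T : Set (Eucl n))) with hM'
  have hxM' : x ∈ M' := mem_affineSpan ℝ (Set.mem_insert _ _)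
  have hdirne : M'.direction ≠ ⊤ := by
    intro h
    exact hterm ((AffineSubspace.direction_eq_top_iff_of_nonempty ⟨x, hxM'⟩).1 h)
  have hbot : M'.directionᗮ ≠ ⊥ := by
    intro h
    exact hdirne (Submodule.orthogonal_eq_bot_iff.1 h)
  obtain ⟨v, hvmem, hv0⟩ := Submodule.exists_mem_ne_zero_of_ne_bot hbot
  have hvT : ∀ s ∈ T, ⟪s, v⟫ = ⟪x, v⟫ := by
    intro s hs
    have hsM' : s ∈ M' := mem_affineSpan ℝ (Set.mem_insert_of_mem _ (Finset.mem_coe.2 hs))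
    have hdiff : s -ᵥ x ∈ M'.direction := AffineSubspace.vsub_mem_direction hsM' hxM'
    have h0 := (Submodule.mem_orthogonal _ v).1 hvmem _ hdiff
    simp only [vsub_eq_sub, inner_sub_left] at h0
    linarith
  have hs0 : ∃ s0 ∈ S, ⟪s0, v⟫ ≠ ⟪x, v⟫ := by
    by_contra h
    push_neg at h
    have hsub : (↑S : Set (Eucl n)) ⊆
        (AffineSubspace.mk' x (LinearMap.ker (svLin v)) : Set (Eucl n)) := by
      intro s hs
      rw [SetLike.mem_coe, AffineSubspace.mem_mk']
      simp only [LinearMap.mem_ker, svLin_apply, vsub_eq_sub, inner_sub_left]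
      rw [h s hs]
      ring
    have hles := affineSpan_le.2 hsub
    rw [hspan] at hles
    have hmem : x + v ∈ AffineSubspace.mk' x (LinearMap.ker (svLin v)) :=
      hles (AffineSubspace.mem_top ℝ _ _)
    rw [AffineSubspace.mem_mk'] at hmem
    simp only [LinearMap.mem_ker, svLin_apply, vsub_eq_sub, add_sub_cancel_left] at hmem
    have h2 : ‖v‖ * ‖v‖ = 0 := by rw [← real_inner_self_eq_norm_mul_norm]; exact hmem
    exact hv0 (norm_eq_zero.1 (mul_self_eq_zero.1 h2))
  obtain ⟨s0, hs0S, hs0ne⟩ := hs0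
  obtain ⟨v', hv'T, hv'B⟩ : ∃ v' : Eucl n, (∀ s ∈ T, ⟪s, v'⟫ = ⟪x, v'⟫) ∧
      ∃ s1 ∈ S, ⟪x, v'⟫ < ⟪s1, v'⟫ := by
    rcases lt_or_gt_of_ne hs0ne with h | h
    · exact ⟨-v, fun s hs => by simp only [inner_neg_right]; rw [hvT s hs],
        s0, hs0S, by simp only [inner_neg_right]; linarith⟩
    · exact ⟨v, hvT, s0, hs0S, h⟩
  set d := ⟪x, v'⟫ with hd
  set B' := S.filter fun s => d < ⟪s, v'⟫ with hB'
  obtain ⟨s1, hs1S, hs1gt⟩ := hv'B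
  have hB'ne : B'.Nonempty := ⟨s1, Finset.mem_filter.2 ⟨hs1S, hs1gt⟩⟩
  have hBnotT : ∀ s ∈ B', ⟪s, u⟫ < c := by
    intro s hs
    obtain ⟨hsS, hsgt⟩ := Finset.mem_filter.1 hs
    rcases lt_or_eq_of_le (hle s hsS) with h | h
    · exact h
    · exfalso
      have hsT : s ∈ T := Finset.mem_filter.2 ⟨hsS, h⟩
      rw [hv'T s hsT] at hsgt
      exact lt_irrefl _ hsgt
  obtain ⟨sm, hsmB, hsmmin⟩ :=
    Finset.exists_min_image B' (fun s => (c - ⟪s, u⟫) / (⟪s, v'⟫ - d)) hB'ne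
  set tst := (c - ⟪sm, u⟫) / (⟪sm, v'⟫ - d) with htst
  have hsmS : sm ∈ S := (Finset.mem_filter.1 hsmB).1
  have hsmgt : d < ⟪sm, v'⟫ := (Finset.mem_filter.1 hsmB).2
  have htstpos : 0 < tst := div_pos (by linarith [hBnotT sm hsmB]) (by linarith)
  have hinner : ∀ y : Eucl n, ⟪y, u + tst • v'⟫ = ⟪y, u⟫ + tst * ⟪y, v'⟫ := by
    intro y
    rw [inner_add_right, real_inner_smul_right]
  have hsmval : ⟪sm, u⟫ + tst * ⟪sm, v'⟫ = c + tst * d := by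
    have hne : ⟪sm, v'⟫ - d ≠ 0 := by linarith
    have h1 : tst * (⟪sm, v'⟫ - d) = c - ⟪sm, u⟫ := by
      rw [htst, div_mul_cancel₀ _ hne]
    nlinarith [h1]
  refine ⟨u + tst • v', c + tst * d, ?_, ?_, ?_⟩
  · intro s hsS
    rw [hinner]
    by_cases hs : d < ⟪s, v'⟫
    · have hmin := hsmmin s (Finset.mem_filter.2 ⟨hsS, hs⟩)
      have h2 := (le_div_iff₀ (by linarith : (0:ℝ) < ⟪s, v'⟫ - d)).1 hmin
      nlinarith [hle s hsS]
    · push_neg at hs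
      have h1 := hle s hsS
      have h2 := mul_le_mul_of_nonneg_left hs htstpos.le
      linarith
  · rw [hinner]
    linarith
  · have hTval : ∀ s ∈ T, ⟪s, u⟫ + tst * ⟪s, v'⟫ = c + tst * d := by
      intro s hs
      rw [hv'T s hs, (Finset.mem_filter.1 hs).2]
    have hsub : (S.filter fun s => ⟪s, u + tst • v'⟫ < c + tst * d) ⊆
        (S.filter fun s => ⟪s, u⟫ < c).erase sm := by
      intro s hs
      obtain ⟨hsS, hslt⟩ := Finset.mem_filter.1 hs
      rw [hinner] at hslt
      refine Finset.mem_erase.2 ⟨?_, Finset.mem_filter.2 ⟨hsS, ?_⟩⟩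
      · rintro rfl
        rw [hsmval] at hslt
        exact lt_irrefl _ hslt
      · rcases lt_or_eq_of_le (hle s hsS) with h | h
        · exact h
        · exfalso
          have hsT : s ∈ T := Finset.mem_filter.2 ⟨hsS, h⟩
          rw [hTval s hsT] at hslt
          exact lt_irrefl _ hslt
    have hsmmem : sm ∈ S.filter fun s => ⟪s, u⟫ < c :=
      Finset.mem_filter.2 ⟨hsmS, hBnotT sm hsmB⟩
    have h1 := Finset.card_le_card hsub
    rw [Finset.card_erase_of_mem hsmmem] at h1
    have h2 := Finset.card_pos.2 ⟨sm, hsmmem⟩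
    omega

/-- Any separating half-space can be tilted so that its boundary hyperplane is spanned
by touching points of `S`. -/
lemma sv_tilt (hn : 1 ≤ n) {S : Finset (Eucl n)}
    (hspan : affineSpan ℝ (↑S : Set (Eucl n)) = ⊤) (x : Eucl n) :
    ∀ (k : ℕ) (u : Eucl n) (c : ℝ),
      (S.filter fun s => ⟪s, u⟫ < c).card ≤ k →
      (∀ s ∈ S, ⟪s, u⟫ ≤ c) → c < ⟪x, u⟫ →
      ∃ (u' : Eucl n) (c' : ℝ), (∀ s ∈ S, ⟪s, u'⟫ ≤ c') ∧ c' < ⟪x, u'⟫ ∧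
        {y : Eucl n | ⟪y, u'⟫ = c'} =
          (affineSpan ℝ (↑(S.filter fun s => ⟪s, u'⟫ = c') : Set (Eucl n)) : Set (Eucl n)) := by
  classical
  intro k
  induction k with
  | zero =>
    intro u c hcard hle hx
    by_cases hterm : affineSpan ℝ
        (insert x (↑(S.filter fun s => ⟪s, u⟫ = c) : Set (Eucl n))) = ⊤
    · exact ⟨u, c, hle, hx, sv_tilt_terminal hn hle hx hterm⟩
    · exfalso
      obtain ⟨u', c', _, _, hlt⟩ := sv_tilt_step hspan x u c hle hx hterm
      omega
  | succ k ih =>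
    intro u c hcard hle hx
    by_cases hterm : affineSpan ℝ
        (insert x (↑(S.filter fun s => ⟪s, u⟫ = c) : Set (Eucl n))) = ⊤
    · exact ⟨u, c, hle, hx, sv_tilt_terminal hn hle hx hterm⟩
    · obtain ⟨u', c', hle', hx', hlt⟩ := sv_tilt_step hspan x u c hle hx hterm
      exact ih u' c' (by omega) hle' hx'

lemma sv_interior_strict {P : Set (Eucl n)} {p : Eucl n} (hp : p ∈ interior P)
    {u : Eucl n} (hu : u ≠ 0) {c : ℝ} (hP : P ⊆ {y | ⟪y, u⟫ ≤ c}) : ⟪p, u⟫ < c := by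
  obtain ⟨ε, hε, hball⟩ := Metric.isOpen_iff.1 isOpen_interior p hp
  have hn0 : 0 < ‖u‖ := norm_pos_iff.2 hu
  set y := p + (ε / (2 * ‖u‖)) • u with hy
  have hyball : y ∈ ball p ε := by
    rw [mem_ball, dist_eq_norm, hy, add_sub_cancel_left, norm_smul, Real.norm_eq_abs,
      abs_of_pos (by positivity)]
    have hne := hn0.ne'
    have heq : ε / (2 * ‖u‖) * ‖u‖ = ε / 2 := by field_simp
    rw [heq]
    linarith
  have hyP : y ∈ P := interior_subset (hball hyball)
  have hyle : ⟪y, u⟫ ≤ c := hP hyP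
  rw [hy, inner_add_left, real_inner_smul_left, real_inner_self_eq_norm_mul_norm] at hyle
  have hpos : 0 < ε / (2 * ‖u‖) * (‖u‖ * ‖u‖) := by positivity
  linarith

lemma sv_halfspace_transfer_aux {u u' : Eucl n} {c c' : ℝ} {p : Eucl n}
    (hhyp : {y : Eucl n | ⟪y, u⟫ = c} = {y : Eucl n | ⟪y, u'⟫ = c'})
    (hp : ⟪p, u⟫ < c) (hp' : ⟪p, u'⟫ < c') :
    ∀ y : Eucl n, ⟪y, u⟫ ≤ c → ⟪y, u'⟫ ≤ c' := by
  intro y hy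
  by_contra hcon
  push_neg at hcon
  set t := (c' - ⟪p, u'⟫) / (⟪y, u'⟫ - ⟪p, u'⟫) with ht
  have hd : 0 < ⟪y, u'⟫ - ⟪p, u'⟫ := by linarith
  have ht0 : 0 < t := div_pos (by linarith) hd
  have ht1 : t < 1 := (div_lt_one hd).2 (by linarith)
  set m := p + t • (y - p) with hm
  have hmval : ∀ w : Eucl n, ⟪m, w⟫ = ⟪p, w⟫ + t * (⟪y, w⟫ - ⟪p, w⟫) := by
    intro w
    rw [hm, inner_add_left, real_inner_smul_left, inner_sub_left]
  have hm' : ⟪m, u'⟫ = c' := by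
    rw [hmval, ht, div_mul_cancel₀ _ (ne_of_gt hd)]
    ring
  have hmem : m ∈ {y : Eucl n | ⟪y, u⟫ = c} := by
    rw [hhyp]
    exact hm'
  have hmu : ⟪m, u⟫ = c := hmem
  rw [hmval] at hmu
  nlinarith [hmu]

lemma sv_halfspace_transfer {u u' : Eucl n} {c c' : ℝ} {p : Eucl n}
    (hhyp : {y : Eucl n | ⟪y, u⟫ = c} = {y : Eucl n | ⟪y, u'⟫ = c'})
    (hp : ⟪p, u⟫ < c) (hp' : ⟪p, u'⟫ < c') :
    ∀ y : Eucl n, ⟪y, u⟫ ≤ c ↔ ⟪y, u'⟫ ≤ c' :=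
  fun y => ⟨sv_halfspace_transfer_aux hhyp hp hp' y,
    sv_halfspace_transfer_aux hhyp.symm hp' hp y⟩

/-- Every full-dimensional polytope not containing fixed extra structure admits a finite
list of half-spaces as a witness. -/
lemma sv_exists_witness (hn : 1 ≤ n) {S : Finset (Eucl n)} (hSne : S.Nonempty)
    (hspan : affineSpan ℝ (↑S : Set (Eucl n)) = ⊤) :
    ∃ l : List (Eucl n × ℝ),
      (∀ p ∈ l, convexHull ℝ (↑S : Set (Eucl n)) ⊆ {y | ⟪y, p.1⟫ ≤ p.2} ∧ p.2 < 0) ∧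
      convexHull ℝ (insert (0 : Eucl n) (convexHull ℝ (↑S : Set (Eucl n)))) ∩ InterL l
        = convexHull ℝ (↑S : Set (Eucl n)) := by
  classical
  set P := convexHull ℝ (↑S : Set (Eucl n)) with hPdef
  set Cand : Finset (Eucl n) → Prop := fun T => ∃ pr : Eucl n × ℝ, pr.1 ≠ 0 ∧
    P ⊆ {y | ⟪y, pr.1⟫ ≤ pr.2} ∧
    {y : Eucl n | ⟪y, pr.1⟫ = pr.2} = (affineSpan ℝ (↑T : Set (Eucl n)) : Set (Eucl n))
    with hCand
  set F : Finset (Eucl n) → Eucl n × ℝ := fun T => if h : Cand T then h.choose else (0, 1)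
    with hF
  have hFspec : ∀ T, Cand T → (F T).1 ≠ 0 ∧ P ⊆ {y | ⟪y, (F T).1⟫ ≤ (F T).2} ∧
      {y : Eucl n | ⟪y, (F T).1⟫ = (F T).2}
        = (affineSpan ℝ (↑T : Set (Eucl n)) : Set (Eucl n)) := by
    intro T h
    simp only [hF, dif_pos h]
    exact h.choose_spec
  set l : List (Eucl n × ℝ) :=
    ((S.powerset.filter (fun T => Cand T ∧ (F T).2 < 0)).toList).map F with hl
  have hmeml : ∀ pr ∈ l, ∃ T, Cand T ∧ (F T).2 < 0 ∧ F T = pr := by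
    intro pr hpr
    rw [hl, List.mem_map] at hpr
    obtain ⟨T, hT, rfl⟩ := hpr
    rw [Finset.mem_toList, Finset.mem_filter] at hT
    exact ⟨T, hT.2.1, hT.2.2, rfl⟩
  have hprop : ∀ pr ∈ l, P ⊆ {y | ⟪y, pr.1⟫ ≤ pr.2} ∧ pr.2 < 0 := by
    intro pr hpr
    obtain ⟨T, hCT, hneg, rfl⟩ := hmeml pr hpr
    exact ⟨(hFspec T hCT).2.1, hneg⟩
  refine ⟨l, hprop, ?_⟩
  have hPQ : P ⊆ convexHull ℝ (insert (0 : Eucl n) P) :=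
    (Set.subset_insert _ _).trans (subset_convexHull ℝ _)
  apply Set.Subset.antisymm
  · rintro x ⟨hxQ, hxI⟩
    by_contra hxP
    -- a strictly separating half-space
    have hPcl : IsClosed P := (Set.Finite.isCompact_convexHull (hs := S.finite_toSet) ℝ).isClosed
    have hPcv : Convex ℝ P := convex_convexHull ℝ _
    obtain ⟨f, c0, hfP, hfx⟩ := geometric_hahn_banach_closed_point hPcv hPcl hxP
    obtain ⟨w, hw⟩ := (InnerProductSpace.toDual ℝ (Eucl n)).surjective f
    have hfw : ∀ y : Eucl n, f y = ⟪y, w⟫ := by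
      intro y
      rw [← hw, InnerProductSpace.toDual_apply_apply]
      exact real_inner_comm y w
    have hle0 : ∀ s ∈ S, ⟪s, w⟫ ≤ c0 := by
      intro s hs
      rw [← hfw]
      exact (hfP s (subset_convexHull ℝ _ (Finset.mem_coe.2 hs))).le
    have hx0 : c0 < ⟪x, w⟫ := by rw [← hfw]; exact hfx
    -- tilt
    obtain ⟨u, c, hleu, hxu, hhyper⟩ := sv_tilt hn hspan x
      ((S.filter fun s => ⟪s, w⟫ < c0).card) w c0 le_rfl hle0 hx0
    set T := S.filter fun s => ⟪s, u⟫ = c with hT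
    have hune : u ≠ 0 := by
      rintro rfl
      obtain ⟨s, hs⟩ := hSne
      have h1 := hleu s hs
      rw [inner_zero_right] at h1 hxu
      linarith
    have hPsub : P ⊆ {y | ⟪y, u⟫ ≤ c} :=
      convexHull_min (fun s hs => hleu s (Finset.mem_coe.1 hs)) (sv_halfspace_convex u c)
    have hCT : Cand T := ⟨(u, c), hune, hPsub, hhyper⟩
    -- interior point
    have hPspan : affineSpan ℝ P = ⊤ := by
      rw [hPdef, affineSpan_convexHull]
      exact hspan
    obtain ⟨p, hp⟩ : (interior P).Nonempty := by
      rw [hPcv.interior_nonempty_iff_affineSpan_eq_top]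
      exact hPspan
    have hpu : ⟪p, u⟫ < c := sv_interior_strict hp hune hPsub
    obtain ⟨hu'ne, hPsub', hhyper'⟩ := hFspec T hCT
    have hhyp2 : {y : Eucl n | ⟪y, u⟫ = c} = {y : Eucl n | ⟪y, (F T).1⟫ = (F T).2} := by
      rw [hhyper, hhyper']
    have hpu' : ⟪p, (F T).1⟫ < (F T).2 :=
      sv_interior_strict hp hu'ne hPsub'
    have htrans := sv_halfspace_transfer hhyp2 hpu hpu'
    -- c < 0
    have hc0 : c < 0 := by
      by_contra hge
      push_neg at hge
      have hQsub : convexHull ℝ (insert (0 : Eucl n) P) ⊆ {y | ⟪y, u⟫ ≤ c} := by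
        apply convexHull_min _ (sv_halfspace_convex u c)
        intro y hy
        rcases Set.mem_insert_iff.1 hy with rfl | hy
        · show ⟪(0 : Eucl n), u⟫ ≤ c
          rw [inner_zero_left]
          exact hge
        · exact hPsub hy
      exact absurd (hQsub hxQ) (not_le.2 hxu)
    have hcF : (F T).2 < 0 := by
      by_contra hge
      push_neg at hge
      have h0 : ⟪(0 : Eucl n), (F T).1⟫ ≤ (F T).2 := by
        rw [inner_zero_left]; exact hge
      have := (htrans 0).2 h0
      rw [inner_zero_left] at this
      linarith
    -- so F T belongs to the list and x violates it
    have hTmem : T ∈ S.powerset.filter (fun T => Cand T ∧ (F T).2 < 0) :=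
      Finset.mem_filter.2 ⟨Finset.mem_powerset.2 (Finset.filter_subset _ _), hCT, hcF⟩
    have hFTl : F T ∈ l := by
      rw [hl, List.mem_map]
      exact ⟨T, Finset.mem_toList.2 hTmem, rfl⟩
    have hxle : ⟪x, (F T).1⟫ ≤ (F T).2 := hxI (F T) hFTl
    have hxle' : ⟪x, u⟫ ≤ c := (htrans x).2 hxle
    linarith
  · intro y hy
    refine ⟨hPQ hy, ?_⟩
    intro pr hpr
    exact (hprop pr hpr).1 hy

section Val
variable {A' : Type*} [AddCommGroup A']

lemma sv_val_cut (hn : 1 ≤ n) (D : Set (Eucl n) → A') (hDe : D ∅ = 0)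
    (hDv : ∀ K L : Set (Eucl n), IsPolytope K → IsPolytope L → IsPolytope (K ∪ L) →
      D (K ∪ L) + D (K ∩ L) = D K + D L)
    (hDs : ∀ P : Set (Eucl n), IsPolytope P → setDim P < n → D P = 0)
    {R : Set (Eucl n)} (hR : IsPolytope R) {u : Eucl n} (hu : u ≠ 0) {c : ℝ}
    (h1 : (R ∩ {y | ⟪y, u⟫ ≤ c}).Nonempty) (h2 : (R ∩ {y | c ≤ ⟪y, u⟫}).Nonempty) :
    D R = D (R ∩ {y | ⟪y, u⟫ ≤ c}) + D (R ∩ {y | c ≤ ⟪y, u⟫}) := by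
  have hRconv : Convex ℝ R := by
    obtain ⟨S, _, rfl⟩ := hR
    exact convex_convexHull ℝ _
  obtain ⟨y1, hy1R, hy1⟩ := h1
  obtain ⟨y2, hy2R, hy2⟩ := h2
  have hy1' : ⟪y1, u⟫ ≤ c := hy1
  have hy2' : c ≤ ⟪y2, u⟫ := hy2
  have hslice : (R ∩ {y | ⟪y, u⟫ = c}).Nonempty := by
    rcases eq_or_lt_of_le hy1' with h | h
    · exact ⟨y1, hy1R, h⟩
    rcases eq_or_lt_of_le hy2' with h' | h'
    · exact ⟨y2, hy2R, h'.symm⟩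
    · refine ⟨qpt u c y1 y2, ?_, (qpt_spec' h.le h').1⟩
      exact hRconv.segment_subset hy1R hy2R (qpt_spec' h.le h').2
  have hK := sv_isPolytope_inter_le hR u c ⟨y1, hy1R, hy1⟩
  have hL := sv_isPolytope_inter_ge hR u c ⟨y2, hy2R, hy2⟩
  have hKL : (R ∩ {y | ⟪y, u⟫ ≤ c}) ∪ (R ∩ {y | c ≤ ⟪y, u⟫}) = R := by
    ext y
    constructor
    · rintro (⟨h, _⟩ | ⟨h, _⟩) <;> exact h
    · intro h
      rcases le_total (⟪y, u⟫) c with hc | hc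
      · exact Or.inl ⟨h, hc⟩
      · exact Or.inr ⟨h, hc⟩
  have hKLi : (R ∩ {y | ⟪y, u⟫ ≤ c}) ∩ (R ∩ {y | c ≤ ⟪y, u⟫}) = R ∩ {y | ⟪y, u⟫ = c} := by
    ext y
    simp only [Set.mem_inter_iff, Set.mem_setOf_eq]
    constructor
    · rintro ⟨⟨ha, hb⟩, ⟨_, hc'⟩⟩
      exact ⟨ha, le_antisymm hb hc'⟩
    · rintro ⟨ha, hb⟩
      exact ⟨⟨ha, hb.le⟩, ⟨ha, hb.ge⟩⟩
  have heq := hDv _ _ hK hL (by rw [hKL]; exact hR)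
  rw [hKL, hKLi] at heq
  have hz : D (R ∩ {y | ⟪y, u⟫ = c}) = 0 := by
    apply hDs _ (sv_isPolytope_inter_eq hR u c hslice)
    exact sv_setDim_lt hu Set.inter_subset_right hn
  rw [hz, add_zero] at heq
  exact heq

lemma sv_main (hn : 1 ≤ n) (D : Set (Eucl n) → A') (hDe : D ∅ = 0)
    (hDv : ∀ K L : Set (Eucl n), IsPolytope K → IsPolytope L → IsPolytope (K ∪ L) →
      D (K ∪ L) + D (K ∩ L) = D K + D L)
    (hDs : ∀ P : Set (Eucl n), IsPolytope P → setDim P < n → D P = 0)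
    (hD0 : ∀ P : Set (Eucl n), IsPolytope P → (0 : Eucl n) ∈ P → D P = 0) :
    ∀ (l : List (Eucl n × ℝ)) (R : Set (Eucl n)), IsPolytope R →
      (∀ p ∈ l, R ⊆ {y | ⟪y, p.1⟫ ≤ p.2} ∧ p.2 < 0) →
      convexHull ℝ (insert 0 R) ∩ InterL l = R → D R = 0 := by
  intro l
  induction l with
  | nil =>
    intro R hR hprop hident
    rw [InterL_nil, Set.inter_univ] at hident
    apply hD0 R hR
    rw [← hident]
    exact subset_convexHull ℝ _ (Set.mem_insert _ _)
  | cons p l ih =>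
    intro R hR hprop hident
    have hRne : R.Nonempty := by
      obtain ⟨S, hSne, rfl⟩ := hR
      obtain ⟨s, hs⟩ := hSne
      exact ⟨s, subset_convexHull ℝ _ (Finset.mem_coe.2 hs)⟩
    classical
    have hQ0 : IsPolytope (convexHull ℝ (insert (0 : Eucl n) R)) := by
      obtain ⟨S, hSne, rfl⟩ := hR
      refine ⟨insert 0 S, ⟨0, Finset.mem_insert_self _ _⟩, ?_⟩
      rw [Finset.coe_insert, Set.insert_eq, Set.insert_eq,
        convexHull_convexHull_union_right]
    have hconsEq : convexHull ℝ (insert (0 : Eucl n) R) ∩ InterL (p :: l)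
        = (convexHull ℝ (insert (0 : Eucl n) R) ∩ InterL l) ∩ {y | ⟪y, p.1⟫ ≤ p.2} := by
      rw [InterL_cons]
      ext y
      simp only [Set.mem_inter_iff, Set.mem_setOf_eq]
      tauto
    set Q' := convexHull ℝ (insert (0 : Eucl n) R) ∩ InterL l with hQ'
    have hRQ' : R ⊆ Q' := by
      intro y hy
      exact ⟨subset_convexHull ℝ _ (Set.mem_insert_of_mem _ hy),
        fun pr hpr => (hprop pr (List.mem_cons_of_mem p hpr)).1 hy⟩
    have hQ'ne : Q'.Nonempty := hRne.mono hRQ'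
    have hQ'poly : IsPolytope Q' := sv_isPolytope_interL hQ0 l hQ'ne
    have hRid : Q' ∩ {y | ⟪y, p.1⟫ ≤ p.2} = R := by
      rw [← hident, hconsEq]
    have hcneg : p.2 < 0 := (hprop p List.mem_cons_self).2
    have hu : p.1 ≠ 0 := by
      intro h
      obtain ⟨y, hy⟩ := hRne
      have h2 := (hprop p List.mem_cons_self).1 hy
      rw [h] at h2
      simp only [Set.mem_setOf_eq, inner_zero_right] at h2
      exact absurd h2 (not_le.2 hcneg)
    have hQ'prop : ∀ pr ∈ l, Q' ⊆ {y | ⟪y, pr.1⟫ ≤ pr.2} ∧ pr.2 < 0 := by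
      intro pr hpr
      exact ⟨fun y hy => hy.2 pr hpr, (hprop pr (List.mem_cons_of_mem p hpr)).2⟩
    by_cases hLne : (Q' ∩ {y | p.2 ≤ ⟪y, p.1⟫}).Nonempty
    · have hcut := sv_val_cut hn D hDe hDv hDs hQ'poly hu
        (by rw [hRid]; exact hRne) hLne
      have hQ'id : convexHull ℝ (insert (0 : Eucl n) Q') ∩ InterL l = Q' := by
        apply Set.Subset.antisymm
        · intro y hy
          have hsub : convexHull ℝ (insert (0 : Eucl n) Q')
              ⊆ convexHull ℝ (insert (0 : Eucl n) R) := by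
            apply convexHull_min _ (convex_convexHull ℝ _)
            intro z hz
            rcases Set.mem_insert_iff.1 hz with rfl | hz
            · exact subset_convexHull ℝ _ (Set.mem_insert _ _)
            · exact hz.1
          exact ⟨hsub hy.1, hy.2⟩
        · intro y hy
          exact ⟨subset_convexHull ℝ _ (Set.mem_insert_of_mem _ hy), hy.2⟩
      have hDQ' : D Q' = 0 := ih Q' hQ'poly hQ'prop hQ'id
      set L := Q' ∩ {y | p.2 ≤ ⟪y, p.1⟫} with hLdef
      have hLpoly : IsPolytope L := sv_isPolytope_inter_ge hQ'poly p.1 p.2 hLne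
      have hLprop : ∀ pr ∈ l, L ⊆ {y | ⟪y, pr.1⟫ ≤ pr.2} ∧ pr.2 < 0 := fun pr hpr =>
        ⟨fun y hy => hy.1.2 pr hpr, (hprop pr (List.mem_cons_of_mem p hpr)).2⟩
      have hLid : convexHull ℝ (insert (0 : Eucl n) L) ∩ InterL l = L := by
        apply Set.Subset.antisymm
        · intro y hy
          have hs1 : convexHull ℝ (insert (0 : Eucl n) L)
              ⊆ convexHull ℝ (insert (0 : Eucl n) R) := by
            apply convexHull_min _ (convex_convexHull ℝ _)
            intro z hz
            rcases Set.mem_insert_iff.1 hz with rfl | hz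
            · exact subset_convexHull ℝ _ (Set.mem_insert _ _)
            · exact hz.1.1
          have hs2 : convexHull ℝ (insert (0 : Eucl n) L) ⊆ {y | p.2 ≤ ⟪y, p.1⟫} := by
            apply convexHull_min _ (sv_halfspace_convex_ge p.1 p.2)
            intro z hz
            rcases Set.mem_insert_iff.1 hz with rfl | hz
            · show p.2 ≤ ⟪(0 : Eucl n), p.1⟫
              rw [inner_zero_left]
              linarith
            · exact hz.2
          exact ⟨⟨hs1 hy.1, hy.2⟩, hs2 hy.1⟩
        · intro y hy
          exact ⟨subset_convexHull ℝ _ (Set.mem_insert_of_mem _ hy), hy.1.2⟩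
      have hDL : D L = 0 := ih L hLpoly hLprop hLid
      rw [hRid] at hcut
      rw [hDQ', hDL, add_zero] at hcut
      exact hcut.symm
    · have hQR : Q' = R := by
        rw [← hRid]
        apply Set.Subset.antisymm ?_ Set.inter_subset_left
        intro y hy
        refine ⟨hy, ?_⟩
        by_contra hgt
        simp only [Set.mem_setOf_eq, not_le] at hgt
        exact hLne ⟨y, hy, hgt.le⟩
      have hident' : convexHull ℝ (insert (0 : Eucl n) R) ∩ InterL l = R := by
        rw [← hQ']
        exact hQR
      exact ih R hR (fun pr hpr => hprop pr (List.mem_cons_of_mem p hpr)) hident'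

lemma sv_key (hn : 1 ≤ n) (D : Set (Eucl n) → A') (hDe : D ∅ = 0)
    (hDv : ∀ K L : Set (Eucl n), IsPolytope K → IsPolytope L → IsPolytope (K ∪ L) →
      D (K ∪ L) + D (K ∩ L) = D K + D L)
    (hDs : ∀ P : Set (Eucl n), IsPolytope P → setDim P < n → D P = 0)
    (hD0 : ∀ P : Set (Eucl n), IsPolytope P → (0 : Eucl n) ∈ P → D P = 0) :
    ∀ P : Set (Eucl n), IsPolytope P → D P = 0 := by
  intro P hP
  by_cases hdim : setDim P < n
  · exact hDs P hP hdim
  · obtain ⟨S, hSne, rfl⟩ := hP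
    push_neg at hdim
    have hspan : affineSpan ℝ (↑S : Set (Eucl n)) = ⊤ := by
      have hle : setDim (convexHull ℝ (↑S : Set (Eucl n))) ≤ n := by
        have h := Submodule.finrank_le (affineSpan ℝ (convexHull ℝ (↑S : Set (Eucl n)))).direction
        rwa [finrank_euclideanSpace_fin] at h
      have heq : setDim (convexHull ℝ (↑S : Set (Eucl n))) = n := le_antisymm hle hdim
      have hdirtop : (affineSpan ℝ (convexHull ℝ (↑S : Set (Eucl n)))).direction = ⊤ := by
        apply Submodule.eq_top_of_finrank_eq
        rw [finrank_euclideanSpace_fin]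
        exact heq
      have hne : ((affineSpan ℝ (convexHull ℝ (↑S : Set (Eucl n)))) :
          Set (Eucl n)).Nonempty := by
        obtain ⟨s, hs⟩ := hSne
        exact ⟨s, mem_affineSpan ℝ (subset_convexHull ℝ _ (Finset.mem_coe.2 hs))⟩
      have h := (AffineSubspace.direction_eq_top_iff_of_nonempty hne).1 hdirtop
      rwa [affineSpan_convexHull] at h
    obtain ⟨l, hprop, hident⟩ := sv_exists_witness hn hSne hspan
    exact sv_main hn D hDe hDv hDs hD0 l (convexHull ℝ (↑S : Set (Eucl n)))
      ⟨S, hSne, rfl⟩ hprop hident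

end Val

end SV

/-- A simple valuation on convex polytopes with values in an abelian
group is determined by its values on the polytopes containing the origin. -/
theorem statement_6 (n : ℕ) {A : Type*} [AddCommGroup A]
    (Φ Ψ : Set (Eucl n) → A) (hΦe : Φ ∅ = 0) (hΨe : Ψ ∅ = 0)
    (hΦ : ∀ K L : Set (Eucl n), IsPolytope K → IsPolytope L → IsPolytope (K ∪ L) →
      Φ (K ∪ L) + Φ (K ∩ L) = Φ K + Φ L)
    (hΨ : ∀ K L : Set (Eucl n), IsPolytope K → IsPolytope L → IsPolytope (K ∪ L) →
      Ψ (K ∪ L) + Ψ (K ∩ L) = Ψ K + Ψ L)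
    (hΦs : ∀ P : Set (Eucl n), IsPolytope P → setDim P < n → Φ P = 0)
    (hΨs : ∀ P : Set (Eucl n), IsPolytope P → setDim P < n → Ψ P = 0)
    (hagree : ∀ P : Set (Eucl n), IsPolytopeO P → Φ P = Ψ P) :
    ∀ P : Set (Eucl n), IsPolytope P → Φ P = Ψ P := by
  intro P hP
  rcases Nat.eq_zero_or_pos n with hn0 | hn
  · subst hn0
    have h0 : (0 : Eucl 0) ∈ P := by
      obtain ⟨S, hSne, rfl⟩ := hP
      obtain ⟨s, hs⟩ := hSne
      have hmem : s ∈ convexHull ℝ (↑S : Set (Eucl 0)) :=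
        subset_convexHull ℝ _ (Finset.mem_coe.2 hs)
      have hzs : (0 : Eucl 0) = s := by ext i; exact i.elim0
      rwa [hzs]
    exact hagree P ⟨hP, h0⟩
  · have hkey := sv_key hn (fun K => Φ K - Ψ K)
      (by show Φ ∅ - Ψ ∅ = 0; rw [hΦe, hΨe, sub_zero])
      (fun K L hK hL hKL => by
        show Φ (K ∪ L) - Ψ (K ∪ L) + (Φ (K ∩ L) - Ψ (K ∩ L))
          = (Φ K - Ψ K) + (Φ L - Ψ L)
        rw [sub_add_sub_comm, hΦ K L hK hL hKL, hΨ K L hK hL hKL, ← sub_add_sub_comm])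
      (fun P hP hd => by
        show Φ P - Ψ P = 0
        rw [hΦs P hP hd, hΨs P hP hd, sub_zero])
      (fun P hP h0 => sub_eq_zero.2 (hagree P ⟨hP, h0⟩))
      P hP
    exact sub_eq_zero.1 hkey
end
end

section
/- Let p > 1. If c₁, c₂ ∈ R are such that the map P ↦ c₁·(h(I_p⁺P,·)^p − h(E_p⁺P,·)^p) + c₂·(h(I_p⁻P,·)^p − h(E_p⁻P,·)^p) from P²_o to C_p(R²) is continuous at the line segment [o, e₁], then c₁ = c₂ = 0. In other words, the only linear combination of P ↦ h(I_p⁺P,·)^p − h(E_p⁺P,·)^p and P ↦ h(I_p⁻P,·)^p − h(E_p⁻P,·)^p that is continuous at [o, e₁] is the trivial one. -/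
open MeasureTheory Metric
open scoped RealInnerProductSpace Pointwise

noncomputable section

lemma hull_inner_le {n : ℕ} {V : Set (Eucl n)} {u : Eucl n} {M : ℝ}
    (hub : ∀ y ∈ V, ⟪y, u⟫ ≤ M) : ∀ x ∈ convexHull ℝ V, ⟪x, u⟫ ≤ M := by
  intro x hx
  refine convexHull_min hub (convex_halfSpace_le ?_ M) hx
  exact ⟨fun a b => inner_add_left a b u, fun c a => real_inner_smul_left a u c⟩

lemma sSup_inner_hull {n : ℕ} {V : Set (Eucl n)} {u : Eucl n} {M : ℝ} {x₀ : Eucl n}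
    (hub : ∀ y ∈ V, ⟪y, u⟫ ≤ M) (hx₀ : x₀ ∈ V) (hM : ⟪x₀, u⟫ = M) :
    sSup ((fun x => ⟪x, u⟫) '' convexHull ℝ V) = M :=
  IsGreatest.csSup_eq ⟨⟨x₀, subset_convexHull ℝ V hx₀, hM⟩, by
    rintro z ⟨x, hx, rfl⟩; exact hull_inner_le hub x hx⟩

lemma sSup_rpow_hull {p : ℝ} (hp : 0 ≤ p) {n : ℕ} {V : Set (Eucl n)} {u : Eucl n} {M : ℝ}
    {x₀ : Eucl n} (hM0 : 0 ≤ M) (hub : ∀ y ∈ V, ⟪y, u⟫ ≤ M) (hx₀ : x₀ ∈ V)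
    (hM : ⟪x₀, u⟫ = M) :
    sSup ((fun x => (max ⟪x, u⟫ 0) ^ p) '' convexHull ℝ V) = M ^ p := by
  refine IsGreatest.csSup_eq ⟨⟨x₀, subset_convexHull ℝ V hx₀, by show (max ⟪x₀, u⟫ 0 : ℝ) ^ p = M ^ p; rw [hM, max_eq_left hM0]⟩, ?_⟩
  rintro z ⟨x, hx, rfl⟩
  exact Real.rpow_le_rpow (le_max_right _ 0) (max_le (hull_inner_le hub x hx) hM0) hp

lemma bddAbove_rpow_hull {p : ℝ} {n : ℕ} {V : Set (Eucl n)} {u : Eucl n} {M : ℝ}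
    (hM0 : 0 ≤ M) (hub : ∀ y ∈ V, ⟪y, u⟫ ≤ M) (hp : 0 ≤ p) :
    ∀ z ∈ (fun x => (max ⟪x, u⟫ 0) ^ p) '' convexHull ℝ V, z ≤ M ^ p := by
  rintro z ⟨x, hx, rfl⟩
  exact Real.rpow_le_rpow (le_max_right _ 0) (max_le (hull_inner_le hub x hx) hM0) hp

lemma sSup_rpow_pair {p : ℝ} (hp : 0 ≤ p) {n : ℕ} (y u : Eucl n) :
    sSup ((fun x => (max ⟪x, u⟫ 0) ^ p) '' convexHull ℝ {0, y}) = (max ⟪y, u⟫ 0) ^ p := by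
  rcases le_total 0 ⟪y, u⟫ with h | h
  · rw [max_eq_left h]
    refine sSup_rpow_hull hp h ?_ (Set.mem_insert_of_mem _ rfl) rfl
    rintro y' (rfl | rfl)
    · simpa using h
    · exact le_rfl
  · rw [max_eq_right h]
    have h0 : ⟪(0 : Eucl n), u⟫ = 0 := inner_zero_left u
    refine sSup_rpow_hull hp le_rfl ?_ (Set.mem_insert _ _) h0
    rintro y' (rfl | rfl)
    · simp
    · exact h

lemma suppFn_pair {n : ℕ} (y u : Eucl n) :
    suppFn (convexHull ℝ {0, y}) u = max ⟪y, u⟫ 0 := by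
  unfold suppFn
  rcases le_total 0 ⟪y, u⟫ with h | h
  · rw [max_eq_left h]
    refine sSup_inner_hull ?_ (Set.mem_insert_of_mem _ rfl) rfl
    rintro y' (rfl | rfl)
    · simpa using h
    · exact le_rfl
  · rw [max_eq_right h]
    refine sSup_inner_hull ?_ (Set.mem_insert _ _) (inner_zero_left u)
    rintro y' (rfl | rfl)
    · simp
    · exact h




local notation "e₁" => EuclideanSpace.single (0 : Fin 2) (1:ℝ)
local notation "e₂" => EuclideanSpace.single (1 : Fin 2) (1:ℝ)

def Sseg : Set (Eucl 2) := segment ℝ 0 e₁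

lemma Sseg_eq : Sseg = convexHull ℝ {0, e₁} := (convexHull_pair _ _).symm

lemma inner_e₁ (v : Eucl 2) : ⟪(e₁ : Eucl 2), v⟫ = v 0 := by
  simp [EuclideanSpace.inner_single_left]

lemma inner_e₂ (v : Eucl 2) : ⟪(e₂ : Eucl 2), v⟫ = v 1 := by
  simp [EuclideanSpace.inner_single_left]

lemma suppFn_Sseg (v : Eucl 2) : suppFn Sseg v = max (v 0) 0 := by
  rw [Sseg_eq, suppFn_pair, inner_e₁]

lemma mem_Sseg {x : Eucl 2} (hx : x ∈ Sseg) : ∃ t : ℝ, 0 ≤ t ∧ t ≤ 1 ∧ x = t • e₁ := by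
  obtain ⟨a, b, ha, hb, hab, rfl⟩ := hx
  exact ⟨b, hb, by linarith, by simp⟩

lemma zero_mem_Sseg : (0 : Eucl 2) ∈ Sseg := left_mem_segment _ _ _

lemma norm_sq_two (v : Eucl 2) : ‖v‖ ^ 2 = v 0 ^ 2 + v 1 ^ 2 := by
  rw [← real_inner_self_eq_norm_sq]
  rw [show (inner ℝ v v : ℝ) = ∑ i : Fin 2, v i * v i from rfl]
  simp [Fin.sum_univ_two, sq]

lemma eq_pm_e₂ {v : Eucl 2} (hv : ‖v‖ = 1) (h0 : v 0 = 0) : v = e₂ ∨ v = -e₂ := by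
  have h2 : v 0 ^ 2 + v 1 ^ 2 = 1 := by rw [← norm_sq_two, hv]; norm_num
  rw [h0] at h2
  have : (v 1 - 1) * (v 1 + 1) = 0 := by ring_nf; nlinarith
  rcases mul_eq_zero.1 this with h | h
  · left; ext i; fin_cases i <;> simp [EuclideanSpace.single_apply, h0] <;> linarith
  · right; ext i; fin_cases i <;> simp [EuclideanSpace.single_apply, h0] <;> linarith

lemma face_Sseg_of_neg {v : Eucl 2} (hv : v 0 < 0) : face Sseg v = {0} := by
  ext x
  simp only [face, Set.mem_setOf_eq, Set.mem_singleton_iff, suppFn_Sseg,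
    max_eq_right hv.le]
  constructor
  · rintro ⟨hx, hinner⟩
    obtain ⟨t, ht0, ht1, rfl⟩ := mem_Sseg hx
    rw [real_inner_smul_left, inner_e₁] at hinner
    have : t = 0 := by
      rcases mul_eq_zero.1 hinner with h | h
      · exact h
      · exact absurd h hv.ne
    rw [this, zero_smul]
  · rintro rfl
    exact ⟨zero_mem_Sseg, inner_zero_left v⟩

lemma face_Sseg_of_zero {v : Eucl 2} (hv : v 0 = 0) : face Sseg v = Sseg := by
  ext x
  simp only [face, Set.mem_setOf_eq, suppFn_Sseg, hv, max_self]
  refine ⟨fun h => h.1, fun hx => ⟨hx, ?_⟩⟩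
  obtain ⟨t, _, _, rfl⟩ := mem_Sseg hx
  rw [real_inner_smul_left, inner_e₁, hv, mul_zero]

lemma e₂_props : ‖(e₂ : Eucl 2)‖ = 1 ∧ suppFn Sseg e₂ = 0 := by
  constructor
  · simp [EuclideanSpace.norm_single]
  · rw [suppFn_Sseg]; simp [EuclideanSpace.single_apply]

lemma neg_e₂_props : ‖(-e₂ : Eucl 2)‖ = 1 ∧ suppFn Sseg (-e₂) = 0 := by
  constructor
  · simp [EuclideanSpace.norm_single]
  · rw [suppFn_Sseg]; simp [EuclideanSpace.single_apply]

lemma EppF_Sseg {p : ℝ} (hp : 0 < p) (u : Eucl 2) :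
    EppF p Sseg u = (max (u 0) 0) ^ p := by
  classical
  unfold EppF
  set T := {v : Eucl 2 // ‖v‖ = 1 ∧ suppFn Sseg v = 0} with hT
  set g : T → ℝ := fun v => sSup ((fun x => (max ⟪x, u⟫ 0) ^ p) '' face Sseg v.1) with hg
  have hab : (⟨e₂, e₂_props⟩ : T) ≠ ⟨-e₂, neg_e₂_props⟩ := by
    intro h
    have := congrArg (fun w : T => w.1 1) h
    simp [EuclideanSpace.single_apply] at this
    linarith
  have hz : ∀ v : T, v ∉ ({⟨e₂, e₂_props⟩, ⟨-e₂, neg_e₂_props⟩} : Finset T) → g v = 0 := by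
    rintro ⟨v, hv1, hv2⟩ hv
    simp only [Finset.mem_insert, Finset.mem_singleton, Subtype.mk.injEq, not_or] at hv
    have hle : v 0 ≤ 0 := by
      rw [suppFn_Sseg] at hv2
      exact le_of_max_le_left hv2.le
    have hlt : v 0 < 0 := by
      rcases lt_or_eq_of_le hle with h | h
      · exact h
      · rcases eq_pm_e₂ hv1 h with h' | h'
        · exact absurd (Subtype.ext h') hv.1
        · exact absurd (Subtype.ext h') hv.2
    simp only [hg, face_Sseg_of_neg hlt, Set.image_singleton, csSup_singleton]
    rw [inner_zero_left, max_self, Real.zero_rpow hp.ne']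
  have hfa : g ⟨e₂, e₂_props⟩ = (max (u 0) 0) ^ p := by
    show sSup ((fun x => (max ⟪x, u⟫ 0) ^ p) '' face Sseg e₂) = _
    rw [face_Sseg_of_zero (by simp [EuclideanSpace.single_apply]), Sseg_eq,
      sSup_rpow_pair hp.le, inner_e₁]
  have hfb : g ⟨-e₂, neg_e₂_props⟩ = (max (u 0) 0) ^ p := by
    show sSup ((fun x => (max ⟪x, u⟫ 0) ^ p) '' face Sseg (-e₂)) = _
    rw [face_Sseg_of_zero (by simp [EuclideanSpace.single_apply]), Sseg_eq,
      sSup_rpow_pair hp.le, inner_e₁]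
  rw [tsum_eq_sum hz, Finset.sum_pair hab, hfa, hfb]
  ring



lemma neg_fun_eq {n : ℕ} (p : ℝ) (u : Eucl n) :
    (fun x : Eucl n => (max (-⟪x, u⟫) 0) ^ p) = fun x => (max ⟪x, -u⟫ 0) ^ p := by
  funext x; rw [inner_neg_right]

lemma ImpF_eq {n : ℕ} (p : ℝ) (K : Set (Eucl n)) (u : Eucl n) :
    ImpF p K u = IppF p K (-u) := by
  unfold ImpF IppF; rw [neg_fun_eq]

lemma EmpF_eq {n : ℕ} (p : ℝ) (K : Set (Eucl n)) (u : Eucl n) :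
    EmpF p K u = EppF p K (-u) := by
  unfold EmpF EppF; rw [neg_fun_eq]

lemma IppF_Sseg {p : ℝ} (hp : 0 ≤ p) (u : Eucl 2) :
    IppF p Sseg u = (max (u 0) 0) ^ p := by
  unfold IppF; rw [Sseg_eq, sSup_rpow_pair hp, inner_e₁]

lemma Ipp_sub_Epp_Sseg {p : ℝ} (hp : 0 < p) (u : Eucl 2) :
    IppF p Sseg u - EppF p Sseg u = 0 := by
  rw [IppF_Sseg hp.le, EppF_Sseg hp, sub_self]

-- The polytope
def Pd (δ : ℝ) : Set (Eucl 2) :=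
  convexHull ℝ {(-δ) • e₁, (e₁ : Eucl 2), δ • e₂, (-δ) • e₂}

lemma inner_smul_e₁ (a : ℝ) (v : Eucl 2) : ⟪a • (e₁ : Eucl 2), v⟫ = a * v 0 := by
  rw [real_inner_smul_left, inner_e₁]

lemma inner_smul_e₂ (a : ℝ) (v : Eucl 2) : ⟪a • (e₂ : Eucl 2), v⟫ = a * v 1 := by
  rw [real_inner_smul_left, inner_e₂]

lemma suppFn_Pd_ne {δ : ℝ} (hδ : 0 < δ) (hδ1 : δ ≤ 1) (v : Eucl 2) (hv : ‖v‖ = 1) :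
    suppFn (Pd δ) v ≠ 0 := by
  intro h0
  have hnorm : ∀ y ∈ ({(-δ) • e₁, (e₁ : Eucl 2), δ • e₂, (-δ) • e₂} : Set (Eucl 2)),
      ⟪y, v⟫ ≤ 1 := by
    rintro y (rfl | rfl | rfl | rfl) <;>
      refine le_trans (real_inner_le_norm _ _) ?_ <;>
      rw [hv, mul_one] <;>
      simp [norm_smul, EuclideanSpace.norm_single, abs_of_pos hδ] <;> linarith
  have hbdd : BddAbove ((fun x => ⟪x, v⟫) '' Pd δ) := by
    refine ⟨1, ?_⟩
    rintro z ⟨x, hx, rfl⟩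
    exact hull_inner_le hnorm x hx
  have hvert : ∀ y ∈ ({(-δ) • e₁, (e₁ : Eucl 2), δ • e₂, (-δ) • e₂} : Set (Eucl 2)),
      ⟪y, v⟫ ≤ 0 := by
    intro y hy
    have : ⟪y, v⟫ ≤ suppFn (Pd δ) v :=
      le_csSup hbdd ⟨y, subset_convexHull ℝ _ hy, rfl⟩
    rwa [h0] at this
  have h1 := hvert _ (by simp : (-δ) • e₁ ∈ _)
  have h2 := hvert _ (by simp : (e₁ : Eucl 2) ∈ _)
  have h3 := hvert _ (by simp only [Set.mem_insert_iff, Set.mem_singleton_iff, true_or, or_true] : δ • e₂ ∈ _)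
  have h4 := hvert _ (by simp only [Set.mem_insert_iff, Set.mem_singleton_iff, true_or, or_true] : (-δ) • e₂ ∈ _)
  rw [inner_smul_e₁] at h1
  rw [inner_e₁] at h2
  rw [inner_smul_e₂] at h3
  rw [inner_smul_e₂] at h4
  have hv0 : v 0 = 0 := by nlinarith
  have hv1 : v 1 = 0 := by nlinarith
  have : v = 0 := by
    ext i; fin_cases i
    · exact hv0
    · exact hv1
  rw [this, norm_zero] at hv
  norm_num at hv

lemma EppF_Pd {p δ : ℝ} (hδ : 0 < δ) (hδ1 : δ ≤ 1) (u : Eucl 2) :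
    EppF p (Pd δ) u = 0 := by
  haveI : IsEmpty {v : Eucl 2 // ‖v‖ = 1 ∧ suppFn (Pd δ) v = 0} :=
    ⟨fun v => suppFn_Pd_ne hδ hδ1 v.1 v.2.1 v.2.2⟩
  unfold EppF
  rw [tsum_empty, mul_zero]

lemma e₁_coord0 : (e₁ : Eucl 2) 0 = 1 := by simp
lemma neg_e₁_coord0 : ((-e₁ : Eucl 2)) 0 = -1 := by simp

lemma IppF_Pd_e₁ {p δ : ℝ} (hp : 0 ≤ p) (hδ : 0 < δ) (hδ1 : δ ≤ 1) :
    IppF p (Pd δ) e₁ = 1 := by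
  unfold IppF Pd
  have h := sSup_rpow_hull (M := 1) hp (by norm_num)
    (V := {(-δ) • e₁, (e₁ : Eucl 2), δ • e₂, (-δ) • e₂}) (u := e₁) (x₀ := e₁)
    ?_ (by simp) ?_
  · rw [h, Real.one_rpow]
  · rintro y (rfl | rfl | rfl | rfl)
    · rw [inner_smul_e₁, e₁_coord0]; linarith
    · rw [inner_e₁, e₁_coord0]
    · rw [inner_smul_e₂]; simp
    · rw [inner_smul_e₂]; simp
  · rw [inner_e₁, e₁_coord0]

lemma IppF_Pd_neg_e₁ {p δ : ℝ} (hp : 0 ≤ p) (hδ : 0 < δ) (hδ1 : δ ≤ 1) :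
    IppF p (Pd δ) (-e₁) = δ ^ p := by
  unfold IppF Pd
  refine sSup_rpow_hull hp hδ.le ?_ (by simp : ((-δ) • e₁ : Eucl 2) ∈ _) ?_
  · rintro y (rfl | rfl | rfl | rfl)
    · rw [inner_smul_e₁, neg_e₁_coord0]; linarith
    · rw [inner_e₁, neg_e₁_coord0]; linarith
    · rw [inner_smul_e₂]; simp [hδ.le]
    · rw [inner_smul_e₂]; simp [hδ.le]
  · rw [inner_smul_e₁, neg_e₁_coord0]; ring

lemma zero_mem_Pd {δ : ℝ} (hδ : 0 < δ) : (0 : Eucl 2) ∈ Pd δ := by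
  have h : ((1:ℝ)/2) • (δ • (e₂ : Eucl 2)) + ((1:ℝ)/2) • ((-δ) • (e₂ : Eucl 2)) = 0 := by
    module
  rw [← h]
  exact (convex_convexHull ℝ _)
    (subset_convexHull ℝ _ (by simp)) (subset_convexHull ℝ _ (by simp))
    (by norm_num) (by norm_num) (by norm_num)

lemma Sseg_subset_Pd {δ : ℝ} (hδ : 0 < δ) : Sseg ⊆ Pd δ := by
  intro x hx
  obtain ⟨t, ht0, ht1, rfl⟩ := mem_Sseg hx
  set s : ℝ := (1 - t) / (1 + δ) with hs
  have hs0 : 0 ≤ s := by apply div_nonneg <;> linarith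
  have hs1 : s ≤ 1 := by
    rw [hs, div_le_one (by linarith)]; linarith
  have heq : t • (e₁ : Eucl 2) = s • ((-δ) • e₁) + (1 - s) • e₁ := by
    rw [smul_smul, ← add_smul]
    congr 1
    rw [hs]
    field_simp
    ring
  rw [heq]
  exact (convex_convexHull ℝ _)
    (subset_convexHull ℝ _ (by simp)) (subset_convexHull ℝ _ (by simp))
    hs0 (by linarith) (by ring)

lemma Pd_near {δ : ℝ} (hδ : 0 < δ) : ∀ x ∈ Pd δ, ∃ y ∈ Sseg, dist x y ≤ 2 * δ := by
  have hsub : Pd δ ⊆ Sseg + Metric.closedBall (0 : Eucl 2) (2 * δ) := by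
    refine convexHull_min ?_ (Convex.add (convex_segment _ _) (convex_closedBall _ _))
    have hball : ∀ a : ℝ, |a| ≤ 2 * δ → ∀ w : Eucl 2, ‖w‖ = 1 →
        a • w ∈ Metric.closedBall (0 : Eucl 2) (2 * δ) := by
      intro a ha w hw
      rw [Metric.mem_closedBall, dist_zero_right, norm_smul, hw, mul_one]
      exact ha
    rintro y (rfl | rfl | rfl | rfl)
    · rw [show ((-δ) • e₁ : Eucl 2) = 0 + (-δ) • e₁ by rw [zero_add]]
      exact Set.add_mem_add zero_mem_Sseg
        (hball _ (by rw [abs_neg, abs_of_pos hδ]; linarith) _ (by simp))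
    · rw [show (e₁ : Eucl 2) = e₁ + 0 by rw [add_zero]]
      refine Set.add_mem_add (right_mem_segment _ _ _) ?_
      rw [Metric.mem_closedBall, dist_self]
      linarith
    · rw [show (δ • e₂ : Eucl 2) = 0 + δ • e₂ by rw [zero_add]]
      exact Set.add_mem_add zero_mem_Sseg
        (hball _ (by rw [abs_of_pos hδ]; linarith) _ (by simp))
    · rw [show ((-δ) • e₂ : Eucl 2) = 0 + (-δ) • e₂ by rw [zero_add]]
      exact Set.add_mem_add zero_mem_Sseg
        (hball _ (by rw [abs_neg, abs_of_pos hδ]; linarith) _ (by simp))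
  intro x hx
  obtain ⟨y, hy, z, hz, rfl⟩ := hsub hx
  refine ⟨y, hy, ?_⟩
  rw [dist_eq_norm, add_sub_cancel_left]
  rwa [Metric.mem_closedBall, dist_zero_right] at hz

lemma hausdorff_Pd {δ : ℝ} (hδ : 0 < δ) : hausdorffDist (Pd δ) Sseg ≤ 2 * δ := by
  refine hausdorffDist_le_of_mem_dist (by linarith) (Pd_near hδ) ?_
  intro y hy
  exact ⟨y, Sseg_subset_Pd hδ hy, by rw [dist_self]; linarith⟩




lemma Pd_vertex_le {δ : ℝ} (hδ : 0 < δ) (hδ1 : δ ≤ 1) {u : Eucl 2} (hu : ‖u‖ = 1) :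
    ∀ y ∈ ({(-δ) • e₁, (e₁ : Eucl 2), δ • e₂, (-δ) • e₂} : Set (Eucl 2)), ⟪y, u⟫ ≤ 1 := by
  rintro y (rfl | rfl | rfl | rfl) <;>
    refine le_trans (real_inner_le_norm _ _) ?_ <;>
    rw [hu, mul_one] <;>
    simp [norm_smul, EuclideanSpace.norm_single, abs_of_pos hδ] <;> linarith

lemma IppF_Pd_bounds {p δ : ℝ} (hp : 0 < p) (hδ : 0 < δ) (hδ1 : δ ≤ 1) {u : Eucl 2}
    (hu : ‖u‖ = 1) : 0 ≤ IppF p (Pd δ) u ∧ IppF p (Pd δ) u ≤ 1 := by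
  have hub : ∀ z ∈ (fun x => (max ⟪x, u⟫ 0) ^ p) '' Pd δ, z ≤ 1 := by
    intro z hz
    have := bddAbove_rpow_hull (M := 1) (by norm_num) (Pd_vertex_le hδ hδ1 hu) hp.le z hz
    rwa [Real.one_rpow] at this
  constructor
  · have hmem : (0:ℝ) ∈ (fun x => (max ⟪x, u⟫ 0) ^ p) '' Pd δ := by
      refine ⟨0, zero_mem_Pd hδ, ?_⟩
      show (max ⟪(0 : Eucl 2), u⟫ 0) ^ p = 0
      rw [inner_zero_left, max_self, Real.zero_rpow hp.ne']
    exact le_csSup ⟨1, hub⟩ hmem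
  · exact csSup_le ⟨_, ⟨0, zero_mem_Pd hδ, rfl⟩⟩ hub


set_option maxHeartbeats 1000000 in
/-- The only linear combination of `P ↦ h(I_p⁺P,·)^p − h(E_p⁺P,·)^p` and
`P ↦ h(I_p⁻P,·)^p − h(E_p⁻P,·)^p` (as maps from `𝒫²_o` to `C_p(ℝ²)`) that is continuous at
the line segment `[o, e₁]` is the trivial one. -/
theorem statement_7 (p : ℝ) (hp : 1 < p) (c₁ c₂ : ℝ)
    (G : Set (Eucl 2) → Eucl 2 → ℝ)
    (hG : ∀ (P : Set (Eucl 2)) (u : Eucl 2),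
      G P u = c₁ * (IppF p P u - EppF p P u) + c₂ * (ImpF p P u - EmpF p P u))
    (hcont : ∀ ε > (0:ℝ), ∃ δ > (0:ℝ), ∀ P : Set (Eucl 2), IsPolytopeO P →
      hausdorffDist P (segment ℝ (0 : Eucl 2) (EuclideanSpace.single (0 : Fin 2) (1:ℝ))) < δ →
      sphSup (fun u =>
        G P u - G (segment ℝ (0 : Eucl 2) (EuclideanSpace.single (0 : Fin 2) (1:ℝ))) u) < ε) :
    c₁ = 0 ∧ c₂ = 0 := by
  classical
  have hp0 : (0:ℝ) < p := lt_trans one_pos hp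
  have hGS : ∀ u : Eucl 2, G Sseg u = 0 := by
    intro u
    rw [hG, Ipp_sub_Epp_Sseg hp0, ImpF_eq, EmpF_eq,
      show IppF p Sseg (-u) - EppF p Sseg (-u) = 0 from Ipp_sub_Epp_Sseg hp0 (-u)]
    ring
  have key : ∀ ε > (0:ℝ), |c₁| ≤ 2 * ε ∧ |c₂| ≤ 2 * ε := by
    intro ε hε
    obtain ⟨δ₀, hδ₀, hc⟩ := hcont ε hε
    set A : ℝ := 1 + |c₁| + |c₂| with hA
    have hApos : 0 < A := by
      have := abs_nonneg c₁; have := abs_nonneg c₂; rw [hA]; linarith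
    set δ : ℝ := min (δ₀/4) (min (1/2) (ε/A)) with hδdef
    have hδ : 0 < δ := by
      refine lt_min (by linarith) (lt_min (by norm_num) (by positivity))
    have hδ40 : δ ≤ δ₀/4 := min_le_left _ _
    have hδhalf : δ ≤ 1/2 := le_trans (min_le_right _ _) (min_le_left _ _)
    have hδε : δ ≤ ε/A := le_trans (min_le_right _ _) (min_le_right _ _)
    have hδ1 : δ ≤ 1 := by linarith
    have hpoly : IsPolytopeO (Pd δ) := by
      refine ⟨⟨{(-δ) • e₁, (e₁ : Eucl 2), δ • e₂, (-δ) • e₂}, ?_, ?_⟩, zero_mem_Pd hδ⟩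
      · exact ⟨_, Finset.mem_insert_self _ _⟩
      · unfold Pd; congr 1; simp
    have hdist : hausdorffDist (Pd δ)
        (segment ℝ (0 : Eucl 2) (EuclideanSpace.single (0 : Fin 2) (1:ℝ))) < δ₀ :=
      lt_of_le_of_lt (hausdorff_Pd hδ) (by linarith)
    have hsph := hc (Pd δ) hpoly hdist
    have hGdiff : ∀ u, G (Pd δ) u - G Sseg u
        = c₁ * IppF p (Pd δ) u + c₂ * IppF p (Pd δ) (-u) := by
      intro u
      rw [hGS, hG, EppF_Pd hδ hδ1, ImpF_eq, EmpF_eq, EppF_Pd hδ hδ1]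
      ring
    have hBdd : BddAbove (Set.range fun u : Metric.sphere (0 : Eucl 2) 1 =>
        |G (Pd δ) u.1 - G Sseg u.1|) := by
      refine ⟨|c₁| + |c₂|, ?_⟩
      rintro z ⟨⟨u, hu⟩, rfl⟩
      have hu' : ‖u‖ = 1 := mem_sphere_zero_iff_norm.1 hu
      have hu'' : ‖(-u : Eucl 2)‖ = 1 := by rwa [norm_neg]
      have b1 := IppF_Pd_bounds hp0 hδ hδ1 hu'
      have b2 := IppF_Pd_bounds hp0 hδ hδ1 hu''
      simp only [hGdiff]
      calc |c₁ * IppF p (Pd δ) u + c₂ * IppF p (Pd δ) (-u)|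
          ≤ |c₁ * IppF p (Pd δ) u| + |c₂ * IppF p (Pd δ) (-u)| := abs_add_le _ _
        _ ≤ |c₁| + |c₂| := by
            rw [abs_mul, abs_mul, abs_of_nonneg b1.1, abs_of_nonneg b2.1]
            have := abs_nonneg c₁; have := abs_nonneg c₂
            nlinarith [b1.2, b2.2]
    have hmem1 : (e₁ : Eucl 2) ∈ Metric.sphere (0 : Eucl 2) 1 := by
      rw [mem_sphere_zero_iff_norm]; simp
    have hmem2 : (-e₁ : Eucl 2) ∈ Metric.sphere (0 : Eucl 2) 1 := by
      rw [mem_sphere_zero_iff_norm, norm_neg]; simp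
    have h1 : |G (Pd δ) e₁ - G Sseg e₁| < ε := by
      refine lt_of_le_of_lt ?_ hsph
      exact le_ciSup hBdd ⟨e₁, hmem1⟩
    have h2 : |G (Pd δ) (-e₁) - G Sseg (-e₁)| < ε := by
      refine lt_of_le_of_lt ?_ hsph
      exact le_ciSup hBdd ⟨-e₁, hmem2⟩
    rw [hGdiff, IppF_Pd_e₁ hp0.le hδ hδ1, IppF_Pd_neg_e₁ hp0.le hδ hδ1] at h1
    rw [hGdiff, neg_neg, IppF_Pd_neg_e₁ hp0.le hδ hδ1, IppF_Pd_e₁ hp0.le hδ hδ1] at h2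
    have hdp0 : 0 ≤ δ ^ p := Real.rpow_nonneg hδ.le p
    have hdp : δ ^ p ≤ δ := by
      have := Real.rpow_le_rpow_of_exponent_ge hδ hδ1 hp.le
      rwa [Real.rpow_one] at this
    have hAe : A * (ε / A) = ε := mul_div_cancel₀ _ hApos.ne'
    have hc2 : |c₂| * δ ^ p ≤ ε := by
      have h1' : |c₂| * δ ^ p ≤ |c₂| * δ := by nlinarith [abs_nonneg c₂]
      have h2' : |c₂| * δ ≤ A * (ε / A) := by
        have hcA : |c₂| ≤ A := by have := abs_nonneg c₁; rw [hA]; linarith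
        nlinarith [abs_nonneg c₂, div_nonneg hε.le hApos.le]
      linarith
    have hc1 : |c₁| * δ ^ p ≤ ε := by
      have h1' : |c₁| * δ ^ p ≤ |c₁| * δ := by nlinarith [abs_nonneg c₁]
      have h2' : |c₁| * δ ≤ A * (ε / A) := by
        have hcA : |c₁| ≤ A := by have := abs_nonneg c₂; rw [hA]; linarith
        nlinarith [abs_nonneg c₁, div_nonneg hε.le hApos.le]
      linarith
    constructor
    · have : |c₁| ≤ |c₁ * 1 + c₂ * δ ^ p| + |c₂ * δ ^ p| := by
        calc |c₁| = |(c₁ * 1 + c₂ * δ ^ p) - c₂ * δ ^ p| := by ring_nf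
          _ ≤ |c₁ * 1 + c₂ * δ ^ p| + |c₂ * δ ^ p| := abs_sub _ _
      rw [abs_mul, abs_of_nonneg hdp0] at this
      linarith
    · have : |c₂| ≤ |c₁ * δ ^ p + c₂ * 1| + |c₁ * δ ^ p| := by
        calc |c₂| = |(c₁ * δ ^ p + c₂ * 1) - c₁ * δ ^ p| := by ring_nf
          _ ≤ |c₁ * δ ^ p + c₂ * 1| + |c₁ * δ ^ p| := abs_sub _ _
      rw [abs_mul, abs_of_nonneg hdp0] at this
      linarith
  constructor
  · by_contra h
    have hpos : 0 < |c₁| := abs_pos.2 h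
    have := (key (|c₁|/8) (by positivity)).1
    linarith
  · by_contra h
    have hpos : 0 < |c₂| := abs_pos.2 h
    have := (key (|c₂|/8) (by positivity)).2
    linarith
end
end
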